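/- arXiv:1210.2691 — 11 statements merged into one kernel-verified Lean document; each statement's English description precedes it below -/
import Mathlib

section
/- If G is a torsion-free group in which commuting is a transitive relation on non-identity elements, and some non-identity element x of G has centralizer of finite index in G, then G is abelian. -/
/-- A monoid is torsion-free if no nontrivial elements have finite order (old Mathlib definition). -/
def Monoid.IsTorsionFree (G : Type*) [Monoid G] : Prop :=
  ∀ g : G, g ≠ 1 → ¬IsOfFinOrder g

theorem ct_centralizer_finite_index_abelian (G : Type*) [Group G]
    (htf : Monoid.IsTorsionFree G)
    (hCT : ∀ a b c : G, a ≠ 1 → b ≠ 1 → c ≠ 1 →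
      Commute a b → Commute b c → Commute a c)
    (x : G) (hx : x ≠ 1)
    (hfi : (Subgroup.centralizer {x}).FiniteIndex) :
    ∀ a b : G, a * b = b * a := by
  have hcx : ∀ g : G, g ≠ 1 → Commute g x := by
    intro g hg
    obtain ⟨n, hn, _, hmem⟩ :=
      Subgroup.exists_pow_mem_of_index_ne_zero hfi.index_ne_zero g
    have hgn : g ^ n ≠ 1 := by
      intro h
      exact htf g hg (isOfFinOrder_iff_pow_eq_one.mpr ⟨n, hn, h⟩)
    have hcomm : Commute (g ^ n) x := by
      have := Subgroup.mem_centralizer_iff.mp hmem x rfl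
      exact this.symm
    exact hCT g (g ^ n) x hg hgn hx (Commute.pow_right rfl n) hcomm
  intro a b
  by_cases ha : a = 1
  · simp [ha]
  by_cases hb : b = 1
  · simp [hb]
  exact hCT a x b ha hx hb (hcx a ha) ((hcx b hb).symm)
end

section
/- Every torsion-free, virtually nilpotent group which is commutative transitive is abelian. -/
/-- A nontrivial nilpotent group has a nontrivial central element. -/
lemma exists_center_ne_one_of_nilpotent {H : Type*} [Group H]
    [hn : Group.IsNilpotent H] [Nontrivial H] :
    ∃ z : H, z ∈ Subgroup.center H ∧ z ≠ 1 := by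
  by_contra h
  push_neg at h
  have hcenter : Subgroup.center H = ⊥ := by
    rw [Subgroup.eq_bot_iff_forall]
    intro x hx
    by_contra hx1
    exact hx1 (h x hx)
  have hall : ∀ n, Subgroup.upperCentralSeries H n = ⊥ := by
    intro n
    induction n with
    | zero => exact upperCentralSeries_zero H
    | succ n ih =>
      rw [Subgroup.eq_bot_iff_forall]
      intro x hx
      rw [mem_upperCentralSeries_succ_iff] at hx
      have hxc : x ∈ Subgroup.center H := by
        rw [Subgroup.mem_center_iff]
        intro y
        have := hx y
        rw [ih, Subgroup.mem_bot] at this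
        have : x * y * x⁻¹ = y := by
          have h' := congrArg (· * y) this
          simpa [commutatorElement_def, mul_assoc] using h'
        calc y * x = x * y * x⁻¹ * x := by rw [this]
          _ = x * y := by group
      rw [hcenter, Subgroup.mem_bot] at hxc
      exact hxc
  obtain ⟨n, hn'⟩ := hn.nilpotent
  obtain ⟨x, y, hxy⟩ := exists_pair_ne H
  have hx : x ∈ Subgroup.upperCentralSeries H n := hn' ▸ Subgroup.mem_top x
  have hy : y ∈ Subgroup.upperCentralSeries H n := hn' ▸ Subgroup.mem_top y
  rw [hall n, Subgroup.mem_bot] at hx hy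
  exact hxy (hx.trans hy.symm)

theorem ct_virtually_nilpotent_abelian (G : Type*) [Group G]
    (htf : Monoid.IsTorsionFree G)
    (hvn : ∃ H : Subgroup G, H.FiniteIndex ∧ Group.IsNilpotent H)
    (hCT : ∀ a b c : G, a ≠ 1 → b ≠ 1 → c ≠ 1 →
      Commute a b → Commute b c → Commute a c) :
    ∀ a b : G, a * b = b * a := by
  intro a b
  by_cases ha : a = 1
  · simp [ha]
  by_cases hb : b = 1
  · simp [hb]
  obtain ⟨H, hfi, hnil⟩ := hvn
  obtain ⟨k, hk0, -, hak⟩ := Subgroup.exists_pow_mem_of_index_ne_zero hfi.index_ne_zero a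
  obtain ⟨m, hm0, -, hbm⟩ := Subgroup.exists_pow_mem_of_index_ne_zero hfi.index_ne_zero b
  have hak1 : a ^ k ≠ 1 := fun h =>
    htf a ha (isOfFinOrder_iff_pow_eq_one.mpr ⟨k, hk0, h⟩)
  have hbm1 : b ^ m ≠ 1 := fun h =>
    htf b hb (isOfFinOrder_iff_pow_eq_one.mpr ⟨m, hm0, h⟩)
  haveI : Nontrivial H := ⟨⟨⟨a ^ k, hak⟩, 1, by simp [Subtype.ext_iff, hak1]⟩⟩
  obtain ⟨z, hz, hz1⟩ := exists_center_ne_one_of_nilpotent (H := H)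
  have hz1G : (z : G) ≠ 1 := fun h => hz1 (by exact_mod_cast Subtype.ext h)
  have hcz : ∀ x : G, (hx : x ∈ H) → Commute x (z : G) := by
    intro x hx
    have := Subgroup.mem_center_iff.mp hz ⟨x, hx⟩
    exact congrArg Subtype.val this
  have h1 : Commute a (a ^ k) := (Commute.refl a).pow_right k
  have h2 : Commute (a ^ k) (z : G) := hcz _ hak
  have h3 : Commute b (b ^ m) := (Commute.refl b).pow_right m
  have h4 : Commute (b ^ m) (z : G) := hcz _ hbm
  have haz : Commute a (z : G) := hCT a (a ^ k) z ha hak1 hz1G h1 h2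
  have hbz : Commute b (z : G) := hCT b (b ^ m) z hb hbm1 hz1G h3 h4
  exact hCT a (z : G) b ha hz1G hb haz hbz.symm
end

section
/- Any subgroup of SL(2,C) not containing -I is commutative transitive: if A, B, C are non-identity matrices in the subgroup with AB = BA and BC = CB, then AC = CA. -/
open Matrix

lemma commutant_lemma (M N : Matrix (Fin 2) (Fin 2) ℂ)
    (hns : M 0 1 ≠ 0 ∨ M 1 0 ≠ 0 ∨ M 0 0 ≠ M 1 1)
    (h : N * M = M * N) : ∃ a b : ℂ, N = a • (1 : Matrix (Fin 2) (Fin 2) ℂ) + b • M := by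
  have e : ∀ i j, (N * M) i j = (M * N) i j := fun i j => by rw [h]
  have e00 := e 0 0
  have e01 := e 0 1
  have e10 := e 1 0
  simp [Matrix.mul_apply, Fin.sum_univ_two] at e00 e01 e10
  rcases hns with hb | hc | had
  · refine ⟨N 0 0 - M 0 0 * (N 0 1 / M 0 1), N 0 1 / M 0 1, ?_⟩
    ext i j
    fin_cases i <;> fin_cases j <;>
      simp [Matrix.one_apply, Matrix.add_apply, Matrix.smul_apply] <;>
      field_simp
    all_goals first
      | ring1
      | linear_combination e00
      | linear_combination -e00
      | linear_combination e01
      | linear_combination -e01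
      | linear_combination e10
      | linear_combination -e10
  · refine ⟨N 0 0 - M 0 0 * (N 1 0 / M 1 0), N 1 0 / M 1 0, ?_⟩
    ext i j
    fin_cases i <;> fin_cases j <;>
      simp [Matrix.one_apply, Matrix.add_apply, Matrix.smul_apply] <;>
      field_simp
    all_goals first
      | ring1
      | linear_combination e00
      | linear_combination -e00
      | linear_combination e01
      | linear_combination -e01
      | linear_combination e10
      | linear_combination -e10
  · refine ⟨N 0 0 - M 0 0 * ((N 0 0 - N 1 1) / (M 0 0 - M 1 1)),
      (N 0 0 - N 1 1) / (M 0 0 - M 1 1), ?_⟩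
    have hsub : M 0 0 - M 1 1 ≠ 0 := sub_ne_zero.mpr had
    ext i j
    fin_cases i <;> fin_cases j <;>
      simp [Matrix.one_apply, Matrix.add_apply, Matrix.smul_apply] <;>
      field_simp
    all_goals first
      | ring1
      | linear_combination e00
      | linear_combination -e00
      | linear_combination e01
      | linear_combination -e01
      | linear_combination e10
      | linear_combination -e10

lemma nonscalar_of_SL2 (B : Matrix.SpecialLinearGroup (Fin 2) ℂ)
    (h1 : B ≠ 1) (h2 : (B : Matrix (Fin 2) (Fin 2) ℂ) ≠ -1) :
    (B : Matrix (Fin 2) (Fin 2) ℂ) 0 1 ≠ 0 ∨ (B : Matrix (Fin 2) (Fin 2) ℂ) 1 0 ≠ 0 ∨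
      (B : Matrix (Fin 2) (Fin 2) ℂ) 0 0 ≠ (B : Matrix (Fin 2) (Fin 2) ℂ) 1 1 := by
  by_contra hcon
  push_neg at hcon
  obtain ⟨hb, hc, had⟩ := hcon
  have hdet : (B : Matrix (Fin 2) (Fin 2) ℂ).det = 1 := B.2
  rw [Matrix.det_fin_two, hb, hc, ← had] at hdet
  have hsq : ((B : Matrix (Fin 2) (Fin 2) ℂ) 0 0 - 1) * ((B : Matrix (Fin 2) (Fin 2) ℂ) 0 0 + 1) = 0 := by
    linear_combination hdet
  rcases mul_eq_zero.mp hsq with h | h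
  · apply h1
    apply Subtype.ext
    show (B : Matrix (Fin 2) (Fin 2) ℂ) = 1
    have h00 : (B : Matrix (Fin 2) (Fin 2) ℂ) 0 0 = 1 := by linear_combination h
    ext i j
    fin_cases i <;> fin_cases j <;> simp [Matrix.one_apply, hb, hc, h00, ← had]
  · apply h2
    have h00 : (B : Matrix (Fin 2) (Fin 2) ℂ) 0 0 = -1 := by linear_combination h
    ext i j
    fin_cases i <;> fin_cases j <;> simp [Matrix.one_apply, hb, hc, h00, ← had]

theorem subgroup_SL2_no_negI_commutative_transitive
    (G : Subgroup (Matrix.SpecialLinearGroup (Fin 2) ℂ))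
    (hG : ∀ g ∈ G, (g : Matrix (Fin 2) (Fin 2) ℂ) ≠ -1)
    (A B C : Matrix.SpecialLinearGroup (Fin 2) ℂ)
    (hA : A ∈ G) (hB : B ∈ G) (hC : C ∈ G)
    (hA1 : A ≠ 1) (hB1 : B ≠ 1) (hC1 : C ≠ 1)
    (hAB : A * B = B * A) (hBC : B * C = C * B) :
    A * C = C * A := by
  have hns := nonscalar_of_SL2 B hB1 (hG B hB)
  have hAB' : (A : Matrix (Fin 2) (Fin 2) ℂ) * B = B * A := by
    exact_mod_cast congrArg (Subtype.val) hAB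
  have hCB' : (C : Matrix (Fin 2) (Fin 2) ℂ) * B = B * C := by
    exact_mod_cast congrArg (Subtype.val) hBC.symm
  obtain ⟨a, b, hAe⟩ := commutant_lemma B A hns hAB'
  obtain ⟨c, d, hCe⟩ := commutant_lemma B C hns hCB'
  apply Subtype.ext
  show (A : Matrix (Fin 2) (Fin 2) ℂ) * C = C * A
  rw [hAe, hCe]
  simp only [add_mul, mul_add, smul_mul_assoc, mul_smul_comm, smul_smul, mul_one, one_mul]
  module
end

section
/- Let G be a subgroup of SL(2,C) with -I not in G, and let D be the subgroup of diagonal matrices in G. Then D is malnormal in G: for any g in G - D, g D g^{-1} ∩ D = {I}. -/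
set_option maxHeartbeats 1000000


theorem diagonal_subgroup_malnormal
    (G : Subgroup (Matrix.SpecialLinearGroup (Fin 2) ℂ))
    (hG : ∀ g ∈ G, (g : Matrix (Fin 2) (Fin 2) ℂ) ≠ -1)
    (g : Matrix.SpecialLinearGroup (Fin 2) ℂ) (hg : g ∈ G)
    (hgD : ¬ (g : Matrix (Fin 2) (Fin 2) ℂ).IsDiag) :
    ∀ d₁ d₂ : Matrix.SpecialLinearGroup (Fin 2) ℂ, d₁ ∈ G → d₂ ∈ G →
      (d₁ : Matrix (Fin 2) (Fin 2) ℂ).IsDiag →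
      (d₂ : Matrix (Fin 2) (Fin 2) ℂ).IsDiag →
      g * d₁ * g⁻¹ = d₂ → d₂ = 1 := by
  intro d₁ d₂ hd₁G hd₂G hd₁ hd₂ h
  -- notation for entries
  set p := (g : Matrix (Fin 2) (Fin 2) ℂ) 0 0 with hp
  set q := (g : Matrix (Fin 2) (Fin 2) ℂ) 0 1 with hq
  set r := (g : Matrix (Fin 2) (Fin 2) ℂ) 1 0 with hr
  set s := (g : Matrix (Fin 2) (Fin 2) ℂ) 1 1 with hs
  set a := (d₁ : Matrix (Fin 2) (Fin 2) ℂ) 0 0 with ha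
  set b := (d₁ : Matrix (Fin 2) (Fin 2) ℂ) 1 1 with hb
  set c := (d₂ : Matrix (Fin 2) (Fin 2) ℂ) 0 0 with hc
  set e := (d₂ : Matrix (Fin 2) (Fin 2) ℂ) 1 1 with he
  have hd₁01 : (d₁ : Matrix (Fin 2) (Fin 2) ℂ) 0 1 = 0 := hd₁ (by decide)
  have hd₁10 : (d₁ : Matrix (Fin 2) (Fin 2) ℂ) 1 0 = 0 := hd₁ (by decide)
  have hd₂01 : (d₂ : Matrix (Fin 2) (Fin 2) ℂ) 0 1 = 0 := hd₂ (by decide)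
  have hd₂10 : (d₂ : Matrix (Fin 2) (Fin 2) ℂ) 1 0 = 0 := hd₂ (by decide)
  have detg : p * s - q * r = 1 := by
    have := g.property
    rw [Matrix.det_fin_two] at this
    exact this
  have detd₁ : a * b = 1 := by
    have := d₁.property
    rw [Matrix.det_fin_two] at this
    rw [hd₁01] at this
    simpa using this
  have detd₂ : c * e = 1 := by
    have := d₂.property
    rw [Matrix.det_fin_two] at this
    rw [hd₂01] at this
    simpa using this
  have h2 : g * d₁ = d₂ * g := mul_inv_eq_iff_eq_mul.mp h
  have key : (g : Matrix (Fin 2) (Fin 2) ℂ) * (d₁ : Matrix (Fin 2) (Fin 2) ℂ)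
      = (d₂ : Matrix (Fin 2) (Fin 2) ℂ) * (g : Matrix (Fin 2) (Fin 2) ℂ) := by
    have := congrArg (Subtype.val) h2
    simpa using this
  have E : ∀ i j : Fin 2, ((g : Matrix (Fin 2) (Fin 2) ℂ) * (d₁ : Matrix (Fin 2) (Fin 2) ℂ)) i j
      = ((d₂ : Matrix (Fin 2) (Fin 2) ℂ) * (g : Matrix (Fin 2) (Fin 2) ℂ)) i j := by
    intro i j; rw [key]
  have e00 : p * a = c * p := by
    have := E 0 0
    simpa [Matrix.mul_apply, Fin.sum_univ_two, hd₁10, hd₂01] using this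
  have e01 : q * b = c * q := by
    have := E 0 1
    simpa [Matrix.mul_apply, Fin.sum_univ_two, hd₁01, hd₂01] using this
  have e10 : r * a = e * r := by
    have := E 1 0
    simpa [Matrix.mul_apply, Fin.sum_univ_two, hd₁10, hd₂10] using this
  have e11 : s * b = e * s := by
    have := E 1 1
    simpa [Matrix.mul_apply, Fin.sum_univ_two, hd₁01, hd₂10] using this
  -- final goal reduces to c = 1 and e = 1
  have finish : c = 1 → e = 1 → d₂ = 1 := by
    intro hc1 he1
    apply Subtype.ext
    ext i j
    fin_cases i <;> fin_cases j <;>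
      simp_all [Matrix.one_apply]
  -- if c = e then d₂ = ±1 and -1 is excluded
  by_cases hce : c = e
  · have hc2 : c * c = 1 := by rw [hce] at detd₂ ⊢; exact detd₂
    have : (c - 1) * (c + 1) = 0 := by ring_nf; linear_combination hc2
    rcases mul_eq_zero.mp this with h1 | h1
    · have hc1 : c = 1 := by linear_combination h1
      exact finish hc1 (by rw [← hce]; exact hc1)
    · exfalso
      have hc1 : c = -1 := by linear_combination h1
      apply hG d₂ hd₂G
      ext i j
      fin_cases i <;> fin_cases j <;>
        simp_all [Matrix.one_apply]
  · exfalso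
    by_cases hq0 : q = 0
    · -- then r ≠ 0 (g not diagonal), and p ≠ 0 since det = p*s = 1
      have hr0 : r ≠ 0 := by
        intro hr0
        apply hgD
        intro i j hij
        fin_cases i <;> fin_cases j <;> simp_all
      have hp0 : p ≠ 0 := by
        intro hp0
        rw [hp0, hq0] at detg
        simp at detg
      have hac : a = c := by
        have : a * p = c * p := by linear_combination e00
        exact mul_right_cancel₀ hp0 this
      have hae : a = e := by
        have : a * r = e * r := by linear_combination e10
        exact mul_right_cancel₀ hr0 this
      exact hce (hac ▸ hae)
    · -- q ≠ 0 : b = c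
      have hbc : b = c := by
        have : b * q = c * q := by linear_combination e01
        exact mul_right_cancel₀ hq0 this
      by_cases hp0 : p = 0
      · have hr0 : r ≠ 0 := by
          intro hr0
          rw [hp0, hr0] at detg
          simp at detg
        have hae : a = e := by
          have : a * r = e * r := by linear_combination e10
          exact mul_right_cancel₀ hr0 this
        by_cases hs0 : s = 0
        · -- g is antidiagonal with q*r = -1, so g² = -1, contradiction
          apply hG (g * g) (mul_mem hg hg)
          have hqr : q * r = -1 := by
            rw [hp0, hs0] at detg; linear_combination -detg
          have : ((g * g : Matrix.SpecialLinearGroup (Fin 2) ℂ) : Matrix (Fin 2) (Fin 2) ℂ)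
              = (g : Matrix (Fin 2) (Fin 2) ℂ) * (g : Matrix (Fin 2) (Fin 2) ℂ) := by simp
          rw [this]
          ext i j
          fin_cases i <;> fin_cases j <;>
            simp only [Matrix.mul_apply, Fin.sum_univ_two, Matrix.neg_apply,
              Matrix.one_apply, Fin.mk_zero, Fin.mk_one, Matrix.cons_val',
              if_true, if_false, eq_self_iff_true, Fin.zero_eta, Fin.isValue] <;>
            simp only [← hp, ← hq, ← hr, ← hs] <;>
            simp only [hp0, hs0] <;>
            first
            | linear_combination hqr
            | norm_num
        · have hbe : b = e := by
            have : b * s = e * s := by linear_combination e11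
            exact mul_right_cancel₀ hs0 this
          exact hce (hbc ▸ hbe)
      · have hac : a = c := by
          have : a * p = c * p := by linear_combination e00
          exact mul_right_cancel₀ hp0 this
        -- a = c, b = c, a*b = 1 ⇒ c² = 1 ⇒ e = 1/c = c, contradiction
        have hcc : c * c = 1 := by linear_combination detd₁ - b * hac - c * hbc
        have hc0 : c ≠ 0 := by intro h0; rw [h0] at hcc; simp at hcc
        apply hce
        have : c * c = c * e := by rw [hcc, detd₂]
        exact mul_left_cancel₀ hc0 this
end

section
/- In any group, an element g is contained in a unique maximal abelian subgroup for every non-identity g if and only if the group is commutative transitive. -/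
/-- Every abelian subgroup is contained in a maximal abelian subgroup. -/
lemma exists_maximal_abelian {G : Type*} [Group G] (H : Subgroup G)
    (hH : IsMulCommutative H) :
    ∃ M : Subgroup G, H ≤ M ∧ IsMulCommutative M ∧
      ∀ N : Subgroup G, IsMulCommutative N → M ≤ N → M = N := by
  have hchain : ∀ c ⊆ {K : Subgroup G | IsMulCommutative K}, IsChain (· ≤ ·) c →
      ∀ y ∈ c, ∃ ub ∈ {K : Subgroup G | IsMulCommutative K}, ∀ z ∈ c, z ≤ ub := by
    intro c hcs hc K hK
    refine ⟨sSup c, ⟨⟨fun x y => ?_⟩⟩, fun z hz => le_sSup hz⟩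
    have hdir : DirectedOn (· ≤ ·) c := hc.directedOn
    obtain ⟨A, hA, hxA⟩ := (Subgroup.mem_sSup_of_directedOn ⟨K, hK⟩ hdir).1 x.2
    obtain ⟨B, hB, hyB⟩ := (Subgroup.mem_sSup_of_directedOn ⟨K, hK⟩ hdir).1 y.2
    obtain ⟨C, hC, hAC, hBC⟩ := hdir A hA B hB
    have : IsMulCommutative C := hcs hC
    exact Subtype.ext (Subgroup.mul_comm_of_mem_isMulCommutative (H := C) (hAC hxA) (hBC hyB))
  obtain ⟨M, hHM, hMs, hMmax⟩ := zorn_le_nonempty₀ _ hchain H hH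
  exact ⟨M, hHM, hMs, fun N hN hMN => le_antisymm hMN (hMmax hN hMN)⟩

lemma closure_pair_comm {G : Type*} [Group G] {a b : G} (hab : Commute a b) :
    IsMulCommutative (Subgroup.closure {a, b}) := by
  refine ⟨⟨fun x y => Subtype.ext ?_⟩⟩
  have key : ∀ u ∈ ({a, b} : Set G), ∀ v ∈ ({a, b} : Set G), u * v = v * u := by
    rintro u (rfl | rfl) v (rfl | rfl)
    exacts [rfl, hab, hab.symm, rfl]
  refine Subgroup.closure_induction₂ (p := fun s t _ _ => s * t = t * s)
    (fun u v hu hv => key u hu v hv) (fun s _ => by simp) (fun s _ => by simp)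
    ?_ ?_ ?_ ?_ x.2 y.2
  · intro s t u _ _ _ h1 h2
    rw [mul_assoc, h2, ← mul_assoc, h1, mul_assoc]
  · intro t u s _ _ _ h1 h2
    rw [← mul_assoc, h1, mul_assoc, h2, ← mul_assoc]
  · exact fun s t _ _ h => Commute.inv_left h
  · exact fun s t _ _ h => Commute.inv_right h

theorem unique_maximal_abelian_iff_ct (G : Type*) [Group G] :
    (∀ g : G, g ≠ 1 → ∃! M : Subgroup G,
        (IsMulCommutative M ∧ ∀ N : Subgroup G, IsMulCommutative N → M ≤ N → M = N)
        ∧ g ∈ M) ↔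
    (∀ a b c : G, a ≠ 1 → b ≠ 1 → c ≠ 1 →
      Commute a b → Commute b c → Commute a c) := by
  constructor
  · intro h a b c ha hb hc hab hbc
    obtain ⟨M, hMle, hMcomm, hMmax⟩ := exists_maximal_abelian _ (closure_pair_comm hab)
    obtain ⟨N, hNle, hNcomm, hNmax⟩ := exists_maximal_abelian _ (closure_pair_comm hbc)
    obtain ⟨U, _, hU⟩ := h b hb
    have hbM : b ∈ M := hMle (Subgroup.subset_closure (by simp))
    have hbN : b ∈ N := hNle (Subgroup.subset_closure (by simp))
    have hMN : M = N := by
      rw [hU M ⟨⟨hMcomm, hMmax⟩, hbM⟩, hU N ⟨⟨hNcomm, hNmax⟩, hbN⟩]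
    have haM : a ∈ M := hMle (Subgroup.subset_closure (by simp))
    have hcM : c ∈ M := hMN ▸ hNle (Subgroup.subset_closure (by simp))
    exact Subgroup.mul_comm_of_mem_isMulCommutative (H := M) haM hcM
  · intro h g hg
    have hcent : IsMulCommutative (Subgroup.centralizer {g}) := by
      refine ⟨⟨fun x y => Subtype.ext ?_⟩⟩
      have hx := Subgroup.mem_centralizer_singleton_iff.1 x.2
      have hy := Subgroup.mem_centralizer_singleton_iff.1 y.2
      rcases eq_or_ne (x : G) 1 with h1 | hx1
      · simp [h1]
      rcases eq_or_ne (y : G) 1 with h1 | hy1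
      · simp [h1]
      exact h (x : G) g (y : G) hx1 hg hy1 hx hy.symm
    have hmem : g ∈ Subgroup.centralizer {g} :=
      Subgroup.mem_centralizer_singleton_iff.2 rfl
    refine ⟨Subgroup.centralizer {g}, ⟨⟨hcent, ?_⟩, hmem⟩, ?_⟩
    · intro N hN hle
      refine le_antisymm hle fun n hn => ?_
      exact Subgroup.mem_centralizer_singleton_iff.2
        (Subgroup.mul_comm_of_mem_isMulCommutative (H := N) hn (hle hmem))
    · rintro M ⟨⟨hMcomm, hMmax⟩, hgM⟩
      have hle : M ≤ Subgroup.centralizer {g} := fun m hm =>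
        Subgroup.mem_centralizer_singleton_iff.2
          (Subgroup.mul_comm_of_mem_isMulCommutative (H := M) hm hgM)
      exact hMmax _ hcent hle
end

section
/- Let A be a subgroup of SL(2,C) in which the identity is the only element with trace ±2, and let a = diag(λ, λ^{-1}) be a non-identity diagonal element of A. Then any element x of A that has some zero entry is itself diagonal, and hence commutes with a. -/
theorem zero_entry_implies_diagonal
    (A : Subgroup (Matrix.SpecialLinearGroup (Fin 2) ℂ))
    (htr : ∀ g ∈ A, (Matrix.trace (g : Matrix (Fin 2) (Fin 2) ℂ) = 2 ∨
        Matrix.trace (g : Matrix (Fin 2) (Fin 2) ℂ) = -2) → g = 1)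
    (a : Matrix.SpecialLinearGroup (Fin 2) ℂ) (ha : a ∈ A) (ha1 : a ≠ 1)
    (lam : ℂ) (haM : (a : Matrix (Fin 2) (Fin 2) ℂ) = !![lam, 0; 0, lam⁻¹])
    (x : Matrix.SpecialLinearGroup (Fin 2) ℂ) (hx : x ∈ A)
    (hzero : ∃ i j : Fin 2, (x : Matrix (Fin 2) (Fin 2) ℂ) i j = 0) :
    (x : Matrix (Fin 2) (Fin 2) ℂ).IsDiag ∧ a * x = x * a := by
  classical
  obtain ⟨p, b, c, d, hM⟩ : ∃ p b c d, (x : Matrix (Fin 2) (Fin 2) ℂ) = !![p, b; c, d] :=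
    ⟨(x : Matrix (Fin 2) (Fin 2) ℂ) 0 0, (x : Matrix (Fin 2) (Fin 2) ℂ) 0 1,
     (x : Matrix (Fin 2) (Fin 2) ℂ) 1 0, (x : Matrix (Fin 2) (Fin 2) ℂ) 1 1,
     by ext i j; fin_cases i <;> fin_cases j <;> rfl⟩
  have hd2 : p * d - b * c = 1 := by
    have := x.prop
    rw [hM, Matrix.det_fin_two_of] at this
    exact this
  have hadet : lam * lam⁻¹ = 1 := by
    have := a.prop
    rw [haM, Matrix.det_fin_two_of] at this
    simpa using this
  have hlam0 : lam ≠ 0 := by rintro rfl; simp at hadet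
  have hlam1 : lam ≠ 1 := by
    rintro rfl
    refine ha1 (Subtype.ext ?_)
    rw [haM, Matrix.SpecialLinearGroup.coe_one, Matrix.one_fin_two]
    norm_num
  have hlamm1 : lam ≠ -1 := by
    rintro rfl
    refine ha1 (htr a ha (Or.inr ?_))
    rw [haM, Matrix.trace_fin_two_of]
    norm_num
  have hsq : lam * lam ≠ 1 := by
    intro h
    have h2 : (lam - 1) * (lam + 1) = 0 := by linear_combination h
    rcases mul_eq_zero.mp h2 with h1 | h1
    · exact hlam1 (by linear_combination h1)
    · exact hlamm1 (by linear_combination h1)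
  have hcan : ∀ t : ℂ, lam * t = lam⁻¹ * t → t = 0 := by
    intro t ht
    by_contra h0
    apply hsq
    have h2 : lam * (lam * t) = lam * (lam⁻¹ * t) := by rw [ht]
    rw [← mul_assoc, ← mul_assoc, hadet, one_mul] at h2
    nth_rewrite 2 [← one_mul t] at h2
    exact mul_right_cancel₀ h0 h2
  -- Case: diagonal entry zero leads to contradiction
  have key2 : p * d = 0 → False := by
    intro hpd
    have hbc : b * c = -1 := by linear_combination hpd - hd2
    have hmem : x * a * x⁻¹ * a ∈ A := mul_mem (mul_mem (mul_mem hx ha) (inv_mem hx)) ha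
    have htr2 : Matrix.trace ((x * a * x⁻¹ * a : Matrix.SpecialLinearGroup (Fin 2) ℂ) :
        Matrix (Fin 2) (Fin 2) ℂ) = 2 := by
      simp only [Matrix.SpecialLinearGroup.coe_mul, Matrix.SpecialLinearGroup.coe_inv,
        haM, hM, Matrix.adjugate_fin_two_of, Matrix.mul_fin_two, Matrix.trace_fin_two_of]
      ring_nf
      linear_combination (2 + (lam*lam + lam⁻¹*lam⁻¹) * (p*d)) * hadet +
        (lam*lam⁻¹) * (lam*lam⁻¹) * (lam*lam + lam⁻¹*lam⁻¹) * hpd -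
        2 * (lam*lam⁻¹) * hbc +
        (-(lam*lam⁻¹^3) + 2*lam^2 - lam^2*lam⁻¹^4 - lam^3*lam⁻¹ - lam^4*lam⁻¹^2 + 2*lam⁻¹^2) * hpd
    have h1 : x * a * x⁻¹ * a = 1 := htr _ hmem (Or.inl htr2)
    have h2 : x * a = a⁻¹ * x := by
      rw [mul_eq_one_iff_eq_inv] at h1
      rw [mul_inv_eq_iff_eq_mul] at h1
      rw [h1]
    have h3 : (x : Matrix (Fin 2) (Fin 2) ℂ) * (a : Matrix (Fin 2) (Fin 2) ℂ) =
        (a : Matrix (Fin 2) (Fin 2) ℂ).adjugate * (x : Matrix (Fin 2) (Fin 2) ℂ) := by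
      have := congrArg (Matrix.SpecialLinearGroup.toGL) h2
      have h4 := congrArg (fun y : Matrix.SpecialLinearGroup (Fin 2) ℂ =>
        (y : Matrix (Fin 2) (Fin 2) ℂ)) h2
      simpa [Matrix.SpecialLinearGroup.coe_mul, Matrix.SpecialLinearGroup.coe_inv] using h4
    rw [hM, haM, Matrix.adjugate_fin_two_of, Matrix.mul_fin_two, Matrix.mul_fin_two] at h3
    have hp : p = 0 := by
      have := congrFun (congrFun h3 0) 0
      simp at this
      exact hcan p (by linear_combination this)
    have hd : d = 0 := by
      have := congrFun (congrFun h3 1) 1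
      simp at this
      exact hcan d (by linear_combination -this)
    have hmem2 : x * x ∈ A := mul_mem hx hx
    have htr3 : Matrix.trace ((x * x : Matrix.SpecialLinearGroup (Fin 2) ℂ) :
        Matrix (Fin 2) (Fin 2) ℂ) = -2 := by
      simp only [Matrix.SpecialLinearGroup.coe_mul, hM, Matrix.mul_fin_two,
        Matrix.trace_fin_two_of]
      rw [hp, hd]
      linear_combination 2 * hbc
    have h5 : x * x = 1 := htr _ hmem2 (Or.inr htr3)
    have h6 := congrArg (fun y : Matrix.SpecialLinearGroup (Fin 2) ℂ =>
      (y : Matrix (Fin 2) (Fin 2) ℂ) 0 0) h5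
    simp [Matrix.SpecialLinearGroup.coe_mul, hM, Matrix.mul_fin_two, hp] at h6
    rw [h6] at hbc
    norm_num at hbc
  -- Case: off-diagonal entry zero gives diagonality
  have key1 : b * c = 0 → b = 0 ∧ c = 0 := by
    intro hbc
    have hpd : p * d = 1 := by linear_combination hd2 + hbc
    have hmem : x * a * x⁻¹ * a⁻¹ ∈ A :=
      mul_mem (mul_mem (mul_mem hx ha) (inv_mem hx)) (inv_mem ha)
    have htr2 : Matrix.trace ((x * a * x⁻¹ * a⁻¹ : Matrix.SpecialLinearGroup (Fin 2) ℂ) :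
        Matrix (Fin 2) (Fin 2) ℂ) = 2 := by
      simp only [Matrix.SpecialLinearGroup.coe_mul, Matrix.SpecialLinearGroup.coe_inv,
        haM, hM, Matrix.adjugate_fin_two_of, Matrix.mul_fin_two, Matrix.trace_fin_two_of]
      ring_nf
      linear_combination (2 * (p*d) * (lam * lam⁻¹) + 2) * hadet -
        (lam*lam + lam⁻¹*lam⁻¹) * hbc - 2 * (lam*lam⁻¹) * (lam*lam⁻¹) * hpd +
        2 * (lam*lam⁻¹) * hpd + 2*lam*lam⁻¹*hpd - 2*lam*lam⁻¹*hadet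
    have h1 : x * a * x⁻¹ * a⁻¹ = 1 := htr _ hmem (Or.inl htr2)
    have h2 : x * a = a * x := by
      rw [mul_inv_eq_one, mul_inv_eq_iff_eq_mul] at h1
      exact h1
    have h4 := congrArg (fun y : Matrix.SpecialLinearGroup (Fin 2) ℂ =>
      (y : Matrix (Fin 2) (Fin 2) ℂ)) h2
    simp only [Matrix.SpecialLinearGroup.coe_mul] at h4
    rw [hM, haM, Matrix.mul_fin_two, Matrix.mul_fin_two] at h4
    constructor
    · have := congrFun (congrFun h4 0) 1
      simp at this
      exact hcan b (by linear_combination -this)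
    · have := congrFun (congrFun h4 1) 0
      simp at this
      exact hcan c (by linear_combination this)
  have hbc : b = 0 ∧ c = 0 := by
    obtain ⟨i, j, hij⟩ := hzero
    rw [hM] at hij
    fin_cases i <;> fin_cases j <;> simp at hij
    · exact absurd (by rw [hij]; ring) (fun h => key2 h)
    · exact key1 (by rw [hij]; ring)
    · exact key1 (by rw [hij]; ring)
    · exact absurd (by rw [hij]; ring) (fun h => key2 h)
  obtain ⟨hb, hc⟩ := hbc
  constructor
  · intro i j hne
    rw [hM]
    fin_cases i <;> fin_cases j <;>
      [exact absurd rfl hne; simpa using hb; simpa using hc; exact absurd rfl hne]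
  · apply Subtype.ext
    show ((a * x : Matrix.SpecialLinearGroup (Fin 2) ℂ) : Matrix (Fin 2) (Fin 2) ℂ) =
      ((x * a : Matrix.SpecialLinearGroup (Fin 2) ℂ) : Matrix (Fin 2) (Fin 2) ℂ)
    simp only [Matrix.SpecialLinearGroup.coe_mul]
    rw [hM, haM, hb, hc, Matrix.mul_fin_two, Matrix.mul_fin_two]
    ext i j
    fin_cases i <;> fin_cases j <;> simp <;> ring
end

section
/- If G is a subgroup of SL(2,C) such that the only element of G with trace in {-2, 2} is the identity, then G is a CSA group: every maximal abelian subgroup of G is malnormal. -/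
open Matrix

local notation "M₂" => Matrix (Fin 2) (Fin 2) ℂ
local notation "SL" => Matrix.SpecialLinearGroup (Fin 2) ℂ

lemma csa_det_aux (α β : ℂ) (a : M₂) :
    (α • (1:M₂) + β • a).det = α^2 + α*β*a.trace + β^2 * a.det := by
  simp [Matrix.det_fin_two, Matrix.trace_fin_two, Matrix.one_apply]
  ring

lemma csa_trace_aux (α β : ℂ) (a : M₂) :
    (α • (1:M₂) + β • a).trace = 2*α + β*a.trace := by
  simp [Matrix.trace_fin_two, Matrix.one_apply]
  ring

lemma csa_ch (a : M₂) : a*a = a.trace • a - a.det • (1:M₂) := by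
  ext i j
  fin_cases i <;> fin_cases j <;>
    simp [Matrix.mul_apply, Fin.sum_univ_two, Matrix.trace_fin_two, Matrix.det_fin_two,
      Matrix.one_apply] <;> ring

lemma csa_commutant (a b : M₂) (hdet : a.det = 1) (htr : a.trace ^ 2 ≠ 4)
    (h : b * a = a * b) : ∃ α β : ℂ, b = α • (1:M₂) + β • a := by
  have hdet1 : a 0 0 * a 1 1 - a 0 1 * a 1 0 = 1 := by
    simpa [Matrix.det_fin_two] using hdet
  have htr1 : (a 0 0 + a 1 1) ^ 2 ≠ 4 := by
    simpa [Matrix.trace_fin_two] using htr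
  have e00 : b 0 0 * a 0 0 + b 0 1 * a 1 0 = a 0 0 * b 0 0 + a 0 1 * b 1 0 := by
    simpa [Matrix.mul_apply, Fin.sum_univ_two] using congrFun (congrFun h 0) 0
  have e01 : b 0 0 * a 0 1 + b 0 1 * a 1 1 = a 0 0 * b 0 1 + a 0 1 * b 1 1 := by
    simpa [Matrix.mul_apply, Fin.sum_univ_two] using congrFun (congrFun h 0) 1
  have e10 : b 1 0 * a 0 0 + b 1 1 * a 1 0 = a 1 0 * b 0 0 + a 1 1 * b 1 0 := by
    simpa [Matrix.mul_apply, Fin.sum_univ_two] using congrFun (congrFun h 1) 0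
  by_cases hq : a 0 1 ≠ 0
  · refine ⟨b 0 0 - b 0 1 / a 0 1 * a 0 0, b 0 1 / a 0 1, ?_⟩
    ext i j
    fin_cases i <;> fin_cases j <;> simp [Matrix.one_apply] <;> field_simp
    · linear_combination -e00
    · linear_combination -e01
  · push_neg at hq
    have hps : a 0 0 - a 1 1 ≠ 0 := by
      intro hc
      exact htr1 (by linear_combination (a 0 0 - a 1 1) * hc + 4 * hdet1 + 4 * (a 1 0) * hq)
    have hx0 : b 0 1 = 0 := by
      have h2 : b 0 1 * (a 0 0 - a 1 1) = 0 := by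
        linear_combination -e01 + (b 0 0 - b 1 1) * hq
      exact (mul_eq_zero.mp h2).resolve_right hps
    by_cases hr : a 1 0 ≠ 0
    · refine ⟨b 0 0 - b 1 0 / a 1 0 * a 0 0, b 1 0 / a 1 0, ?_⟩
      ext i j
      fin_cases i <;> fin_cases j <;> simp [Matrix.one_apply, hx0, hq] <;> field_simp
      · linear_combination e10
    · push_neg at hr
      have hy0 : b 1 0 = 0 := by
        have h2 : b 1 0 * (a 0 0 - a 1 1) = 0 := by
          linear_combination e10 + (b 0 0 - b 1 1) * hr
        exact (mul_eq_zero.mp h2).resolve_right hps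
      refine ⟨b 0 0 - (b 0 0 - b 1 1) / (a 0 0 - a 1 1) * a 0 0,
        (b 0 0 - b 1 1) / (a 0 0 - a 1 1), ?_⟩
      ext i j
      fin_cases i <;> fin_cases j <;> simp [Matrix.one_apply, hx0, hy0, hq, hr] <;>
        field_simp <;> ring

lemma csa_main (a g gi : M₂) (hgi : g * gi = 1) (hig : gi * g = 1)
    (hdetg : g.det = 1) (hdet : a.det = 1) (htr : a.trace ^ 2 ≠ 4)
    (hcomm : (g * a * gi) * a = a * (g * a * gi)) :
    g * a = a * g ∨ ∃ α : ℂ, g * g = α • (1:M₂) := by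
  obtain ⟨α, β, hb⟩ := csa_commutant a _ hdet htr hcomm
  set t := a.trace with ht
  have hdetgi : gi.det = 1 := by
    have : g.det * gi.det = 1 := by rw [← det_mul, hgi, det_one]
    rw [hdetg, one_mul] at this; exact this
  have htb : (g * a * gi).trace = t := by
    rw [Matrix.trace_mul_comm, ← mul_assoc, hig, one_mul]
  have e1 : 2*α + β*t = t := by
    rw [hb, csa_trace_aux] at htb; exact htb
  have hdb : (g * a * gi).det = 1 := by
    rw [det_mul, det_mul, hdetg, hdet, hdetgi]; ring
  have e2 : α^2 + α*β*t + β^2 = 1 := by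
    rw [hb, csa_det_aux, hdet, mul_one] at hdb; exact hdb
  have hβ : (β - 1) * (β + 1) = 0 := by
    have h4 : t^2 - 4 ≠ 0 := sub_ne_zero.mpr htr
    have key : (β - 1) * (β + 1) * (t^2 - 4) = 0 := by
      linear_combination (2*α + β*t + t) * e1 - 4 * e2
    rcases mul_eq_zero.mp key with h | h
    · exact h
    · exact absurd h h4
  rcases mul_eq_zero.mp hβ with h1 | h1
  · -- β = 1, α = 0
    left
    have hβ1 : β = 1 := sub_eq_zero.mp h1
    have hα : α = 0 := by rw [hβ1] at e1; linear_combination e1/2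
    have h2 : g * a * gi = a := by rw [hb, hα, hβ1]; simp
    have h3 : g * a * gi * g = a * g := by rw [h2]
    rwa [mul_assoc, hig, mul_one] at h3
  · -- β = -1, α = t
    have hβ1 : β = -1 := eq_neg_of_add_eq_zero_left h1
    have hα : α = t := by rw [hβ1] at e1; linear_combination e1/2 -- α = t
    have hga : g * a = t • g - a * g := by
      have h2 : g * a * gi * g = (t • (1:M₂) - a) * g := by
        rw [hb, hα, hβ1]; congr 1; module
      rw [mul_assoc, hig, mul_one] at h2
      rw [h2, sub_mul, smul_mul_assoc, one_mul]
    have hg2a : (g * g) * a = a * (g * g) := by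
      calc (g*g)*a = g*(g*a) := by rw [mul_assoc]
        _ = g*(t • g - a*g) := by rw [hga]
        _ = t • (g*g) - (g*a)*g := by rw [mul_sub, mul_smul_comm, mul_assoc]
        _ = t • (g*g) - (t • g - a*g)*g := by rw [hga]
        _ = a*(g*g) := by rw [sub_mul, smul_mul_assoc, mul_assoc]; abel
    obtain ⟨γ, δ, hgg⟩ := csa_commutant a _ hdet htr hg2a
    by_cases hδ : δ = 0
    · right
      exact ⟨γ, by rw [hgg, hδ]; simp⟩
    · left
      have h3 : g * (g * g) = (g * g) * g := (mul_assoc g g g).symm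
      rw [hgg] at h3
      have h4 : γ • g + δ • (g * a) = γ • g + δ • (a * g) := by
        calc γ • g + δ • (g * a) = g * (γ • (1:M₂) + δ • a) := by
              rw [mul_add, mul_smul_comm, mul_smul_comm, mul_one]
          _ = (γ • (1:M₂) + δ • a) * g := h3
          _ = γ • g + δ • (a * g) := by
              rw [add_mul, smul_mul_assoc, smul_mul_assoc, one_mul]
      have h5 : δ • (g * a) = δ • (a * g) := by
        exact add_left_cancel h4
      exact smul_right_injective _ hδ h5

lemma csa_sq (a : M₂) (hdet : a.det = 1) (h : a * a = 1) : a = 1 ∨ a = -1 := by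
  have hch := csa_ch a
  rw [h, hdet, one_smul] at hch
  -- 1 = trace • a - 1
  have h2 : a.trace • a = (2:ℂ) • (1:M₂) := by
    rw [eq_sub_iff_add_eq] at hch
    rw [← hch]; module
  have htr : a.trace * a.trace = 4 := by
    have := congrArg Matrix.trace h2
    simpa [Matrix.trace_smul, Matrix.trace_one, smul_eq_mul] using this.trans (by norm_num)
  have h3 : (a.trace - 2) * (a.trace + 2) = 0 := by linear_combination htr
  rcases mul_eq_zero.mp h3 with h4 | h4
  · left
    have ht : a.trace = 2 := by linear_combination h4
    rw [ht] at h2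
    exact smul_right_injective _ (by norm_num : (2:ℂ) ≠ 0) h2
  · right
    have ht : a.trace = -2 := by linear_combination h4
    rw [ht] at h2
    have h5 : (2:ℂ) • a = (2:ℂ) • (-1 : M₂) := by
      have : (2:ℂ) • a = -((-2:ℂ) • a) := by module
      rw [this, h2]; module
    exact smul_right_injective _ (by norm_num : (2:ℂ) ≠ 0) h5

lemma csa_poly_comm (a : M₂) (α β γ δ : ℂ) :
    (α • (1:M₂) + β • a) * (γ • (1:M₂) + δ • a)
      = (γ • (1:M₂) + δ • a) * (α • (1:M₂) + β • a) := by
  simp only [add_mul, mul_add, smul_mul_smul_comm, one_mul, mul_one]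
  module

theorem trace_condition_implies_csa
    (G : Subgroup (Matrix.SpecialLinearGroup (Fin 2) ℂ))
    (htr : ∀ g ∈ G, (Matrix.trace (g : Matrix (Fin 2) (Fin 2) ℂ) = 2 ∨
        Matrix.trace (g : Matrix (Fin 2) (Fin 2) ℂ) = -2) → g = 1) :
    ∀ M : Subgroup G,
      (IsMulCommutative M ∧ ∀ N : Subgroup G, IsMulCommutative N → M ≤ N → M = N) →
      ∀ g : G, g ∉ M → ∀ x ∈ M, g * x * g⁻¹ ∈ M → x = 1 := by
  intro M hM g hg x hx hgx
  obtain ⟨hMcomm, hMmax⟩ := hM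
  by_contra hx1
  -- matrix of an element of G
  set m : ↥G → M₂ := fun u => ((u : SL) : M₂) with hmdef
  have hm : ∀ u v : ↥G, m (u * v) = m u * m v := fun u v => by
    simp [hmdef]
  have hmdet : ∀ u : ↥G, (m u).det = 1 := fun u => (u : SL).2
  -- trace condition on x
  set a : M₂ := m x with ha
  have hxtr : a.trace ^ 2 ≠ 4 := by
    intro hc
    have h2 : (a.trace - 2) * (a.trace + 2) = 0 := by linear_combination hc
    have h3 : a.trace = 2 ∨ a.trace = -2 := by
      rcases mul_eq_zero.mp h2 with h | h
      · exact Or.inl (by linear_combination h)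
      · exact Or.inr (by linear_combination h)
    exact hx1 (Subtype.ext (htr (x : SL) x.2 h3))
  -- the centralizer of x in G
  set C : Subgroup ↥G := Subgroup.centralizer {x} with hC
  have hmemC : ∀ u : ↥G, u ∈ C → m u * a = a * m u := by
    intro u hu
    have h1 : x * u = u * x := Subgroup.mem_centralizer_iff.mp hu x rfl
    have h2 := congrArg m h1
    rw [hm, hm] at h2
    exact h2.symm
  have hmemC' : ∀ u : ↥G, m u * a = a * m u → u ∈ C := by
    intro u hu
    apply Subgroup.mem_centralizer_iff.mpr
    intro y hy
    rcases hy with rfl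
    apply Subtype.ext; apply Subtype.ext
    exact hu.symm
  have hCcomm : IsMulCommutative C := by
    constructor; constructor
    intro u v
    obtain ⟨α, β, hu⟩ := csa_commutant a (m u.1) (hmdet x) hxtr (hmemC u.1 u.2)
    obtain ⟨γ, δ, hv⟩ := csa_commutant a (m v.1) (hmdet x) hxtr (hmemC v.1 v.2)
    apply Subtype.ext; apply Subtype.ext; apply Subtype.ext
    have : m (u.1 * v.1) = m (v.1 * u.1) := by
      rw [hm, hm, hu, hv, csa_poly_comm]
    exact this
  have hMleC : M ≤ C := by
    intro u hu
    apply hmemC' u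
    have h1 : x * u = u * x := by
      haveI := hMcomm
      exact Subgroup.mul_comm_of_mem_isMulCommutative (H := M) hx hu
    have h2 := congrArg m h1
    rw [hm, hm] at h2
    exact h2.symm
  have hMC : M = C := hMmax C hCcomm hMleC
  -- apply the key matrix lemma
  have hgi1 : m g * m g⁻¹ = 1 := by
    rw [← hm]; simp [hmdef]
  have hig1 : m g⁻¹ * m g = 1 := by
    rw [← hm]; simp [hmdef]
  have hconj : (m g * a * m g⁻¹) * a = a * (m g * a * m g⁻¹) := by
    have h1 : g * x * g⁻¹ ∈ C := hMC ▸ hgx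
    have h2 : x * (g * x * g⁻¹) = (g * x * g⁻¹) * x :=
      Subgroup.mem_centralizer_iff.mp h1 x rfl
    have h3 := congrArg m h2
    simp only [hm] at h3
    exact h3.symm
  rcases csa_main a (m g) (m g⁻¹) hgi1 hig1 (hmdet g) (hmdet x) hxtr hconj with hcase | ⟨α, hα⟩
  · -- g commutes with x, so g ∈ C = M
    exact hg (hMC ▸ hmemC' g hcase)
  · -- g² is scalar
    have hdet2 : α ^ 2 = 1 := by
      have h1 := congrArg Matrix.det hα
      rw [det_mul, hmdet g, one_mul, Matrix.det_smul, det_one] at h1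
      simpa using h1.symm
    have hαval : α = 1 ∨ α = -1 := by
      have h2 : (α - 1) * (α + 1) = 0 := by linear_combination hdet2
      rcases mul_eq_zero.mp h2 with h | h
      · exact Or.inl (by linear_combination h)
      · exact Or.inr (by linear_combination h)
    have htr2 : (m (g * g)).trace = 2 ∨ (m (g * g)).trace = -2 := by
      rw [hm, hα]
      rcases hαval with rfl | rfl
      · left; simp [Matrix.trace_smul, Matrix.trace_one]
      · right; simp [Matrix.trace_smul, Matrix.trace_one]
    have hgg1 : ((g * g : ↥G) : SL) = 1 := htr ((g * g : ↥G) : SL) (g * g).2 htr2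
    have hgg1' : m g * m g = 1 := by
      rw [← hm]
      exact congrArg (fun z : SL => (z : M₂)) hgg1
    rcases csa_sq (m g) (hmdet g) hgg1' with h | h
    · -- g = 1 ∈ M
      have h1 : g = (1 : ↥G) := Subtype.ext (Subtype.ext h)
      exact hg (h1 ▸ M.one_mem)
    · -- trace g = -2, so g = 1, contradiction with m g = -1... 
      have htrg : (m g).trace = 2 ∨ (m g).trace = -2 := by
        right; rw [h]; simp [Matrix.trace_one]
      have hg1 : (g : SL) = 1 := htr (g : SL) g.2 htrg
      have h1 : g = (1 : ↥G) := Subtype.ext hg1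
      exact hg (h1 ▸ M.one_mem)
end

section
/- Let G1 and G2 be groups in which the centralizer of every non-trivial element is infinite cyclic, let a in G1 and b in G2 be elements generating their own centralizers, and form G = G1 *_{a=b} G2. Then any element of G1 that generates its own centralizer in G1 also generates its own centralizer in G. -/
open Subgroup Monoid Monoid.PushoutI Function

lemma my_zpowersHom_injective {K : Type*} [Group K] {a : K} (ha : ¬IsOfFinOrder a) :
    Injective (zpowersHom K a) := by
  intro x y h
  have h2 : a ^ x.toAdd = a ^ y.toAdd := h
  have := injective_zpow_iff_not_isOfFinOrder.2 ha h2
  exact Multiplicative.toAdd.injective this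

lemma my_zpowersHom_range {K : Type*} [Group K] (a : K) :
    (zpowersHom K a).range = zpowers a := by
  ext x
  constructor
  · rintro ⟨n, rfl⟩
    exact ⟨n.toAdd, rfl⟩
  · rintro ⟨m, rfl⟩
    exact ⟨Multiplicative.ofAdd m, rfl⟩

lemma my_cent_conj_zpowers {K : Type*} [Group K] {g : K}
    (hg : centralizer {g} = zpowers g) (u : K) :
    centralizer {u * g * u⁻¹} = zpowers (u * g * u⁻¹) := by
  ext x
  rw [mem_centralizer_singleton_iff]
  constructor
  · intro hx
    have h2 : (u⁻¹ * x * u) * g = g * (u⁻¹ * x * u) := by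
      have := congrArg (fun z => u⁻¹ * z * u) hx
      simpa [mul_assoc] using this
    have h3 : u⁻¹ * x * u ∈ zpowers g := by
      rw [← hg, mem_centralizer_singleton_iff]; exact h2
    obtain ⟨n, hn⟩ := h3
    simp only at hn
    refine ⟨n, ?_⟩
    show (u * g * u⁻¹) ^ n = x
    rw [conj_zpow, hn]
    group
  · rintro ⟨n, rfl⟩
    exact ((Commute.refl _).zpow_left n).eq
open Subgroup

section GroupLemmas
variable {K : Type*} [Group K]
  (hcent : ∀ x : K, x ≠ 1 → ∃ y : K, ¬ IsOfFinOrder y ∧ centralizer {x} = zpowers y)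

include hcent

/-- torsion-free -/
lemma my_sq_eq_one {v : K} (hv : v ^ 2 = 1) : v = 1 := by
  by_contra h1
  obtain ⟨y, hy, hyc⟩ := hcent v h1
  have hv_mem : v ∈ zpowers y := by
    rw [← hyc, mem_centralizer_singleton_iff]
  obtain ⟨t, rfl⟩ := hv_mem
  rw [← zpow_natCast, ← zpow_mul] at hv
  have := (injective_zpow_iff_not_isOfFinOrder.2 hy)
  have h0 : t * (2:ℕ) = 0 := by
    apply this; simpa using hv
  have : t = 0 := by omega
  simp [this] at h1

variable {a : K} (ha : ¬ IsOfFinOrder a) (hap : centralizer {a} = zpowers a)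
include ha hap

lemma my_cent_pow {k : ℤ} (hk : k ≠ 0) : centralizer {a ^ k} = zpowers a := by
  have hak : a ^ k ≠ 1 := by
    intro h
    exact hk ((injective_zpow_iff_not_isOfFinOrder.2 ha) (by simpa using h))
  obtain ⟨y, hy, hyc⟩ := hcent (a ^ k) hak
  have haz : a ∈ zpowers y := by
    rw [← hyc, mem_centralizer_singleton_iff, ← zpow_one_add, ← zpow_add_one]
    ring_nf
  obtain ⟨l, hl⟩ := haz
  have hyz : y ∈ zpowers a := by
    rw [← hap, mem_centralizer_singleton_iff, ← hl, ← zpow_one_add, ← zpow_add_one]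
    ring_nf
  apply le_antisymm
  · rw [hyc]
    rintro _ ⟨m, rfl⟩
    exact zpow_mem hyz m
  · rintro _ ⟨m, rfl⟩
    rw [mem_centralizer_singleton_iff]
    show a ^ m * a ^ k = a ^ k * a ^ m
    rw [← zpow_add, ← zpow_add, add_comm]

lemma my_conj_nonrange {v : K} (hv : v ∉ zpowers a) {k : ℤ} (hk : k ≠ 0) :
    v * a ^ k * v⁻¹ ∉ zpowers a := by
  have hinj := injective_zpow_iff_not_isOfFinOrder.2 ha
  rintro ⟨m, hm⟩
  simp only at hm
  replace hm : v * a ^ k * v⁻¹ = a ^ m := hm.symm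
  have hm0 : m ≠ 0 := by
    rintro rfl
    rw [zpow_zero] at hm
    have : a ^ k = 1 := by
      have := congrArg (fun x => v⁻¹ * x * v) hm
      simpa [mul_assoc] using this
    exact hk (hinj (by simpa using this))
  have hp : v * a * v⁻¹ ∈ zpowers a := by
    rw [← my_cent_pow hcent ha hap hm0, mem_centralizer_singleton_iff, ← hm, ← conj_zpow]
    exact (Commute.self_zpow _ _).eq
  have hq : v⁻¹ * a * v ∈ zpowers a := by
    rw [← my_cent_pow hcent ha hap hk, mem_centralizer_singleton_iff]
    have hks : a ^ k = v⁻¹ * a ^ m * v := by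
      rw [← hm]; group
    rw [hks]
    have : v⁻¹ * a ^ m * v = (v⁻¹ * a * (v⁻¹)⁻¹) ^ m := by rw [conj_zpow, inv_inv]
    rw [this, inv_inv]
    exact (Commute.self_zpow _ _).eq
  obtain ⟨p, hpe⟩ := hp
  obtain ⟨q, hqe⟩ := hq
  simp only at hpe hqe
  replace hpe : v * a * v⁻¹ = a ^ p := hpe.symm
  replace hqe : v⁻¹ * a * v = a ^ q := hqe.symm
  have hqp : a ^ (q * p) = a ^ (1:ℤ) := by
    rw [zpow_one, zpow_mul, ← hqe]
    have h5 := conj_zpow (i := p) (a := v⁻¹) (b := a)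
    rw [inv_inv] at h5
    rw [h5, ← hpe]
    group
  have hqp1 : q * p = 1 := hinj hqp
  have hp1 : p = 1 ∨ p = -1 := by
    have : IsUnit p := IsUnit.of_mul_eq_one (a := p) q (by linarith [hqp1, mul_comm p q])
    exact Int.isUnit_iff.1 this
  rcases hp1 with rfl | rfl
  · rw [zpow_one] at hpe
    apply hv
    rw [← hap, mem_centralizer_singleton_iff]
    have := congrArg (fun x => x * v) hpe
    simp only [mul_assoc, inv_mul_cancel, mul_one] at this
    rw [this]
  · replace hpe : v * a * v⁻¹ = a⁻¹ := by rw [hpe, zpow_neg_one]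
    have hvv : v ^ 2 * a * (v ^ 2)⁻¹ = a := by
      calc v ^ 2 * a * (v ^ 2)⁻¹ = v * (v * a * v⁻¹) * v⁻¹ := by rw [sq]; group
        _ = v * a⁻¹ * v⁻¹ := by rw [hpe]
        _ = (v * a * v⁻¹)⁻¹ := by group
        _ = a := by rw [hpe, inv_inv]
    have hv2 : v ^ 2 ∈ zpowers a := by
      rw [← hap, mem_centralizer_singleton_iff]
      have := congrArg (fun x => x * v ^ 2) hvv
      simpa [mul_assoc] using this
    obtain ⟨s, hse⟩ := hv2
    simp only at hse
    rcases eq_or_ne s 0 with rfl | hs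
    · rw [zpow_zero] at hse
      have : v = 1 := my_sq_eq_one hcent hse.symm
      exact hv (this ▸ one_mem _)
    · apply hv
      rw [← my_cent_pow hcent ha hap hs, mem_centralizer_singleton_iff, hse]
      group

end GroupLemmas
section Words
variable {ι : Type*} {G : ι → Type*} [∀ i, Group (G i)] {H : Type*} [Group H]
  (φ : ∀ i, H →* G i)
def myProd (L : List (Σ i, G i)) : PushoutI φ :=
  (L.map fun l => of (φ := φ) l.1 l.2).prod
def MyAlt (L : List (Σ i, G i)) : Prop :=
  L.Chain' (fun p q => p.1 ≠ q.1) ∧ ∀ l ∈ L, l.2 ∉ (φ l.1).range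
variable {φ}
@[simp] lemma myProd_nil : myProd φ ([] : List (Σ i, G i)) = 1 := rfl
lemma myProd_cons (l : Σ i, G i) (L : List (Σ i, G i)) :
    myProd φ (l :: L) = of (φ := φ) l.1 l.2 * myProd φ L := by
  simp [myProd]
lemma myProd_append (L M : List (Σ i, G i)) :
    myProd φ (L ++ M) = myProd φ L * myProd φ M := by
  simp [myProd]
lemma myProd_singleton (l : Σ i, G i) :
    myProd φ [l] = of (φ := φ) l.1 l.2 := by
  simp [myProd]
lemma myProd_revInv (L : List (Σ i, G i)) :
    myProd φ (L.reverse.map fun l => ⟨l.1, l.2⁻¹⟩) = (myProd φ L)⁻¹ := by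
  induction L with
  | nil => simp
  | cons l L ih =>
    rw [List.reverse_cons, List.map_append, myProd_append, myProd_cons, ih]
    simp [myProd]

lemma conj_core {M : List (Σ i, G i)} (hM : MyAlt φ M) {i : ι} {m : G i}
    (hm : m ∉ (φ i).range) (hlast : ∀ l ∈ M.getLast?, l.1 ≠ i) :
    MyAlt φ (M ++ ⟨i, m⟩ :: (M.reverse.map fun l => ⟨l.1, l.2⁻¹⟩)) ∧
    myProd φ (M ++ ⟨i, m⟩ :: (M.reverse.map fun l => ⟨l.1, l.2⁻¹⟩)) =
      myProd φ M * of (φ := φ) i m * (myProd φ M)⁻¹ := by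
  constructor
  · constructor
    · rw [List.Chain', List.isChain_append]
      refine ⟨hM.1, ?_, ?_⟩
      · rw [List.isChain_cons]
        constructor
        · intro y hy
          rw [List.head?_map, List.head?_reverse] at hy
          obtain ⟨l, hl, rfl⟩ := Option.map_eq_some_iff.1 hy
          exact fun h => hlast l hl h.symm
        · rw [List.isChain_map, List.isChain_reverse]
          exact List.IsChain.imp (fun a b hab => Ne.symm hab) hM.1
      · intro x hx y hy
        simp only [List.head?_cons, Option.mem_def, Option.some_inj] at hy
        subst hy
        exact hlast x hx
    · intro l hl
      rcases List.mem_append.1 hl with h | h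
      · exact hM.2 l h
      · rcases List.mem_cons.1 h with rfl | h
        · exact hm
        · obtain ⟨l', hl', rfl⟩ := List.mem_map.1 h
          intro hr
          exact hM.2 l' (List.mem_reverse.1 hl') ((inv_mem_iff).1 hr)
  · show myProd φ _ = _
    rw [myProd_append, myProd_cons, myProd_revInv, mul_assoc]
lemma MyAlt.toWord {L : List (Σ i, G i)} (hL : MyAlt φ L) :
    ∃ w : CoprodI.Word G, w.toList = L ∧ Reduced φ w ∧
      ofCoprodI (φ := φ) w.prod = myProd φ L := by
  refine ⟨⟨L, fun l hl h1 => hL.2 l hl (h1 ▸ one_mem _), hL.1⟩, rfl, hL.2, ?_⟩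
  show ofCoprodI (φ := φ) (List.prod (L.map fun l => CoprodI.of l.snd)) = _
  rw [map_list_prod, myProd, List.map_map]
  rfl

/-- nonempty alternating words are not in the base group -/
lemma MyAlt.not_mem_base (hφ : ∀ i, Injective (φ i)) {L : List (Σ i, G i)}
    (hL : MyAlt φ L) (hne : L ≠ []) : myProd φ L ∉ (base φ).range := by
  intro hmem
  obtain ⟨w, hw1, hw2, hw3⟩ := hL.toWord
  have := hw2.eq_empty_of_mem_range hφ (hw3 ▸ hmem)
  rw [this] at hw1
  exact hne (hw1.symm)

/-- uniqueness of the sequence of indices of an alternating word -/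
lemma MyAlt.idx_unique (hφ : ∀ i, Injective (φ i)) {L L' : List (Σ i, G i)}
    (hL : MyAlt φ L) (hL' : MyAlt φ L') (h : myProd φ L = myProd φ L') :
    L.map Sigma.fst = L'.map Sigma.fst := by
  classical
  obtain ⟨d⟩ := Monoid.PushoutI.NormalWord.transversal_nonempty φ hφ
  obtain ⟨w, hw1, hw2, hw3⟩ := hL.toWord
  obtain ⟨w', hw1', hw2', hw3'⟩ := hL'.toWord
  obtain ⟨n, hn1, hn2⟩ := hw2.exists_normalWord_prod_eq d
  obtain ⟨n', hn1', hn2'⟩ := hw2'.exists_normalWord_prod_eq d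
  have : n = n' := Monoid.PushoutI.NormalWord.prod_injective (by rw [hn1, hn1', hw3, hw3', h])
  rw [← hw1, ← hw1', ← hn2, ← hn2', this]


lemma conj_base_not_mem (hφ : ∀ i, Injective (φ i)) {L : List (Σ i, G i)}
    (hL : MyAlt φ L) (hne : L ≠ []) {h : H}
    (hGLh : ∀ (i) (v : G i), v ∉ (φ i).range → v * φ i h * v⁻¹ ∉ (φ i).range) :
    myProd φ L * base φ h * (myProd φ L)⁻¹ ∉ (base φ).range := by
  rcases List.eq_nil_or_concat' L with rfl | ⟨M, ⟨j, v⟩, rfl⟩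
  · exact absurd rfl hne
  · have hv : v ∉ (φ j).range := hL.2 ⟨j, v⟩ (List.mem_append_right _ (List.mem_singleton_self _))
    have hlast : ∀ l ∈ M.getLast?, l.1 ≠ j := by
      have := (List.isChain_append.1 hL.1).2.2
      intro l hl
      exact this l hl ⟨j, v⟩ rfl
    have hM : MyAlt φ M :=
      ⟨(List.isChain_append.1 hL.1).1, fun l hl => hL.2 l (List.mem_append_left _ hl)⟩
    obtain ⟨hAlt, hprod⟩ := conj_core hM (hGLh j v hv) hlast
    intro hmem
    apply MyAlt.not_mem_base hφ hAlt (by simp)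
    rw [hprod]
    have : myProd φ M * of (φ := φ) j (v * φ j h * v⁻¹) * (myProd φ M)⁻¹ =
        myProd φ (M ++ [⟨j, v⟩]) * base φ h * (myProd φ (M ++ [⟨j, v⟩]))⁻¹ := by
      rw [myProd_append, myProd_singleton]
      simp only [map_mul, map_inv, mul_inv_rev, of_apply_eq_base]
      group
    rw [this]
    exact hmem

lemma conj_of_cases (hφ : ∀ i, Injective (φ i)) {L : List (Σ i, G i)}
    (hL : MyAlt φ L) {i : ι} {g g₂ : G i} (hg2 : g₂ ∉ (φ i).range)
    (hconj : ∀ v : G i, v * g * v⁻¹ ∉ (φ i).range)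
    (heq : myProd φ L * of (φ := φ) i g * (myProd φ L)⁻¹ = of (φ := φ) i g₂) :
    L = [] ∨ ∃ v : G i, L = [⟨i, v⟩] := by
  have hg : g ∉ (φ i).range := by simpa using hconj 1
  have hAlt2 : MyAlt φ [⟨i, g₂⟩] := ⟨List.isChain_singleton _, by simpa using hg2⟩
  rcases List.eq_nil_or_concat' L with rfl | ⟨M, ⟨j, v⟩, rfl⟩
  · exact Or.inl rfl
  · right
    by_cases hji : j = i
    · subst hji
      have hv : v ∉ (φ j).range := hL.2 ⟨j, v⟩ (List.mem_append_right _ (List.mem_singleton_self _))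
      have hlast : ∀ l ∈ M.getLast?, l.1 ≠ j := by
        have := (List.isChain_append.1 hL.1).2.2
        intro l hl
        exact this l hl ⟨j, v⟩ rfl
      have hM : MyAlt φ M :=
        ⟨(List.isChain_append.1 hL.1).1, fun l hl => hL.2 l (List.mem_append_left _ hl)⟩
      obtain ⟨hAlt, hprod⟩ := conj_core hM (hconj v) hlast
      have hprod2 : myProd φ (M ++ (⟨j, v * g * v⁻¹⟩ : (Σ i, G i)) :: (M.reverse.map fun l => (⟨l.1, l.2⁻¹⟩ : (Σ i, G i)))) =
          of (φ := φ) j g₂ := by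
        rw [hprod, ← heq, myProd_append, myProd_singleton]
        simp only [map_mul, map_inv, mul_inv_rev]
        group
      have hidx := MyAlt.idx_unique hφ hAlt hAlt2 (by rw [hprod2, myProd_singleton])
      have hlen := congrArg List.length hidx
      simp only [List.length_map, List.length_append, List.length_cons,
        List.length_reverse, List.length_singleton, List.length_nil] at hlen
      have hM0 : M = [] := List.length_eq_zero_iff.1 (by omega)
      subst hM0
      refine ⟨v, ?_⟩
      simp
    · exfalso
      have hlast : ∀ l ∈ (M ++ [(⟨j, v⟩ : Σ i, G i)]).getLast?, l.1 ≠ i := by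
        intro l hl
        simp only [List.getLast?_concat, Option.mem_def, Option.some_inj] at hl
        subst hl
        exact hji
      obtain ⟨hAlt, hprod⟩ := conj_core hL hg hlast
      have hidx := MyAlt.idx_unique hφ hAlt hAlt2 (by rw [hprod, heq, myProd_singleton])
      have hlen := congrArg List.length hidx
      simp only [List.length_map, List.length_append, List.length_cons,
        List.length_reverse, List.length_singleton, List.length_nil] at hlen
      omega

lemma exists_decomp (hφ : ∀ i, Injective (φ i)) (x : PushoutI φ) :
    ∃ (h : H) (L : List (Σ i, G i)), MyAlt φ L ∧ x = base φ h * myProd φ L := by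
  classical
  obtain ⟨d⟩ := Monoid.PushoutI.NormalWord.transversal_nonempty φ hφ
  set n := (Monoid.PushoutI.NormalWord.equiv (d := d)) x with hn
  have hx : x = n.prod := by
    rw [hn]
    exact (Monoid.PushoutI.NormalWord.equiv.symm_apply_apply x).symm
  refine ⟨n.head, n.toList, ⟨n.toWord.chain_ne, ?_⟩, ?_⟩
  · intro l hl hrange
    have hset := n.normalized l.1 l.2 (by simpa using hl)
    have hne1 := n.toWord.ne_one l hl
    apply hne1
    -- l.2 ∈ d.set l.1 and l.2 ∈ range → l.2 = 1
    obtain ⟨t, ht⟩ := hrange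
    have hinj := (d.compl l.1).1
    have := hinj (a₁ := (⟨⟨l.2, ⟨t, ht⟩⟩, ⟨1, d.one_mem l.1⟩⟩ : ((φ l.1).range : Set (G l.1)) × (d.set l.1)))
      (a₂ := (⟨⟨1, one_mem _⟩, ⟨l.2, hset⟩⟩ : ((φ l.1).range : Set (G l.1)) × (d.set l.1))) (by simp)
    simpa using congrArg (fun p => (p.1 : G l.1)) this
  · rw [hx]
    show _ = _ * myProd φ n.toWord.toList
    rw [Monoid.PushoutI.NormalWord.prod]
    congr 1
    show ofCoprodI (List.prod (n.toWord.toList.map fun l => CoprodI.of l.snd)) = _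
    rw [map_list_prod, myProd, List.map_map]
    rfl

end Words
theorem primitive_in_amalgam (G : Fin 2 → Type*) [∀ i, Group (G i)]
    (hcent : ∀ i, ∀ x : G i, x ≠ 1 → ∃ y : G i, ¬ IsOfFinOrder y ∧
        Subgroup.centralizer {x} = Subgroup.zpowers y)
    (a : G 0) (b : G 1)
    (ha : ¬ IsOfFinOrder a) (hap : Subgroup.centralizer {a} = Subgroup.zpowers a)
    (hb : ¬ IsOfFinOrder b) (hbp : Subgroup.centralizer {b} = Subgroup.zpowers b)
    (φ : ∀ i, Multiplicative ℤ →* G i)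
    (hφ0 : φ 0 = zpowersHom (G 0) a) (hφ1 : φ 1 = zpowersHom (G 1) b)
    (g : G 0) (hg : Subgroup.centralizer {g} = Subgroup.zpowers g) :
    Subgroup.centralizer {Monoid.PushoutI.of (φ := φ) 0 g} =
      Subgroup.zpowers (Monoid.PushoutI.of (φ := φ) 0 g) := by
  classical
  have hφinj : ∀ i, Injective (φ i) := by
    rw [Fin.forall_fin_two]
    constructor
    · rw [hφ0]; exact my_zpowersHom_injective ha
    · rw [hφ1]; exact my_zpowersHom_injective hb
  have hr0 : (φ 0).range = zpowers a := by rw [hφ0, my_zpowersHom_range]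
  have hr1 : (φ 1).range = zpowers b := by rw [hφ1, my_zpowersHom_range]
  have hg1 : g ≠ 1 := by
    rintro rfl
    have htop : (centralizer {(1 : G 0)} : Subgroup (G 0)) = ⊤ := by
      ext x; simp [mem_centralizer_singleton_iff]
    rw [htop] at hg
    have : a ∈ zpowers (1 : G 0) := hg ▸ mem_top a
    obtain ⟨n, hn⟩ := this
    simp only [one_zpow] at hn
    exact ha (hn ▸ IsOfFinOrder.one)
  -- the reverse inclusion, used in one branch
  have hrev : zpowers (Monoid.PushoutI.of (φ := φ) 0 g) ≤
      centralizer {Monoid.PushoutI.of (φ := φ) 0 g} := by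
    rintro _ ⟨n, rfl⟩
    exact mem_centralizer_singleton_iff.2 ((Commute.refl _).zpow_left n).eq
  by_cases hc : ∃ u : G 0, u * g * u⁻¹ ∈ (φ 0).range
  · -- g is conjugate into the amalgamated subgroup
    obtain ⟨u, hu⟩ := hc
    rw [hr0] at hu
    obtain ⟨k, hk⟩ := hu
    simp only at hk
    replace hk : a ^ k = u * g * u⁻¹ := hk
    have hk0 : k ≠ 0 := by
      rintro rfl
      rw [zpow_zero] at hk
      apply hg1
      have := congrArg (fun z => u⁻¹ * z * u) hk
      simpa [mul_assoc] using this.symm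
    have hcentak : centralizer {a ^ k} = zpowers a := my_cent_pow (hcent 0) ha hap hk0
    have heqz : zpowers a = zpowers (a ^ k) := by
      calc zpowers a = centralizer {a ^ k} := hcentak.symm
        _ = centralizer {u * g * u⁻¹} := by rw [hk]
        _ = zpowers (u * g * u⁻¹) := my_cent_conj_zpowers hg u
        _ = zpowers (a ^ k) := by rw [← hk]
    have ha_mem : a ∈ zpowers (a ^ k) := heqz ▸ mem_zpowers a
    obtain ⟨m, hm⟩ := ha_mem
    simp only at hm
    have hkm : k * m = 1 := by
      apply injective_zpow_iff_not_isOfFinOrder.2 ha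
      show a ^ (k * m) = a ^ (1 : ℤ)
      rw [zpow_mul, hm, zpow_one]
    have hk2 : k * k = 1 := by
      rcases Int.isUnit_iff.1 (IsUnit.of_mul_eq_one (a := k) m hkm) with rfl | rfl <;> norm_num
    set ζ : Multiplicative ℤ := Multiplicative.ofAdd k with hζ
    have hζ0 : φ 0 ζ = a ^ k := by rw [hφ0]; rfl
    have hζb : φ 1 ζ = b ^ k := by rw [hφ1]; rfl
    have hζ1 : ζ ≠ 1 := by
      simp only [hζ, ne_eq, ofAdd_eq_one]
      exact_mod_cast hk0
    -- centralizer of base ζ is the base subgroup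
    have hbase_cent : centralizer {base φ ζ} = (base φ).range := by
      apply le_antisymm
      · intro x hx
        obtain ⟨h, L, hL, rfl⟩ := exists_decomp hφinj x
        rcases eq_or_ne L [] with rfl | hLne
        · rw [myProd_nil, mul_one]
          exact ⟨h, rfl⟩
        · exfalso
          have hGL : ∀ (i) (v : G i), v ∉ (φ i).range → v * φ i ζ * v⁻¹ ∉ (φ i).range := by
            rw [Fin.forall_fin_two]
            constructor
            · rw [hr0, hζ0]
              intro v hv
              exact my_conj_nonrange (hcent 0) ha hap hv hk0
            · rw [hr1, hζb]
              intro v hv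
              exact my_conj_nonrange (hcent 1) hb hbp hv hk0
          apply conj_base_not_mem hφinj hL hLne hGL
          rw [mem_centralizer_singleton_iff] at hx
          have h2 := congrArg (fun z => (base φ h)⁻¹ * z * (myProd φ L)⁻¹) hx
          simp only [mul_assoc, inv_mul_cancel_left, mul_inv_cancel, mul_one] at h2
          refine ⟨h⁻¹ * ζ * h, ?_⟩
          rw [map_mul, map_mul, map_inv, mul_assoc, ← h2, mul_assoc]
      · rintro _ ⟨t, rfl⟩
        rw [mem_centralizer_singleton_iff, ← map_mul, ← map_mul, mul_comm]
    have hbr : (base φ).range = zpowers (base φ ζ) := by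
      apply le_antisymm
      · rintro _ ⟨t, rfl⟩
        refine ⟨k * t.toAdd, ?_⟩
        show (base φ ζ) ^ (k * t.toAdd) = base φ t
        rw [← map_zpow]
        congr 1
        apply Multiplicative.toAdd.injective
        rw [toAdd_zpow]
        show (k * t.toAdd) • k = t.toAdd
        rw [smul_eq_mul]
        linear_combination t.toAdd * hk2
      · rintro _ ⟨n, rfl⟩
        exact ⟨ζ ^ n, map_zpow _ _ _⟩
    have hgc : u⁻¹ * a ^ k * u = g := by rw [hk]; group
    have hc_eq : Monoid.PushoutI.of (φ := φ) 0 g =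
        Monoid.PushoutI.of (φ := φ) 0 u⁻¹ * base φ ζ *
          (Monoid.PushoutI.of (φ := φ) 0 u⁻¹)⁻¹ := by
      rw [← of_apply_eq_base φ 0, hζ0, ← map_inv, ← map_mul, ← map_mul, inv_inv, hgc]
    rw [hc_eq]
    exact my_cent_conj_zpowers (hbase_cent.trans hbr) _
  · -- g is not conjugate into the amalgamated subgroup
    push_neg at hc
    apply le_antisymm
    · intro x hx
      obtain ⟨h, L, hL, rfl⟩ := exists_decomp hφinj x
      rw [mem_centralizer_singleton_iff] at hx
      have h2 := congrArg (fun z => (base φ h)⁻¹ * z * (myProd φ L)⁻¹) hx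
      simp only [mul_assoc, inv_mul_cancel_left, mul_inv_cancel, mul_one] at h2
      have heq : myProd φ L * Monoid.PushoutI.of (φ := φ) 0 g * (myProd φ L)⁻¹ =
          Monoid.PushoutI.of (φ := φ) 0 ((φ 0 h)⁻¹ * (g * φ 0 h)) := by
        rw [map_mul, map_mul, map_inv, of_apply_eq_base, mul_assoc]
        exact h2
      have hg₂ : (φ 0 h)⁻¹ * (g * φ 0 h) ∉ (φ 0).range := by
        intro hmem
        apply hc (φ 0 h)⁻¹
        rw [inv_inv, mul_assoc]
        exact hmem
      have hconj' : ∀ v : G 0, v * g * v⁻¹ ∉ (φ 0).range := hc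
      rcases conj_of_cases hφinj hL hg₂ hconj' heq with rfl | ⟨v, rfl⟩
      · -- L = []
        obtain ⟨p, hp⟩ : ∃ p : G 0, base φ h * myProd φ ([] : List (Σ i, G i)) =
            Monoid.PushoutI.of (φ := φ) 0 p :=
          ⟨φ 0 h, by rw [myProd_nil, mul_one, of_apply_eq_base]⟩
        have hcomm : p * g = g * p := by
          apply of_injective hφinj 0
          rw [map_mul, map_mul, ← hp]
          exact hx
        have hpz : p ∈ zpowers g := by rw [← hg, mem_centralizer_singleton_iff]; exact hcomm
        obtain ⟨n, hn⟩ := hpz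
        simp only at hn
        rw [hp, ← hn]
        exact ⟨n, (map_zpow _ _ _).symm⟩
      · -- L = [⟨0, v⟩]
        obtain ⟨p, hp⟩ : ∃ p : G 0, base φ h * myProd φ [(⟨0, v⟩ : Σ i, G i)] =
            Monoid.PushoutI.of (φ := φ) 0 p :=
          ⟨φ 0 h * v, by rw [myProd_singleton, map_mul, of_apply_eq_base]⟩
        have hcomm : p * g = g * p := by
          apply of_injective hφinj 0
          rw [map_mul, map_mul, ← hp]
          exact hx
        have hpz : p ∈ zpowers g := by rw [← hg, mem_centralizer_singleton_iff]; exact hcomm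
        obtain ⟨n, hn⟩ := hpz
        simp only at hn
        rw [hp, ← hn]
        exact ⟨n, (map_zpow _ _ _).symm⟩
    · exact hrev
end

section
/- Let α in GL(2,Z) be a matrix none of whose powers fixes a non-zero vector of Z^2 (equivalently, no eigenvalue is a root of unity). Then the semidirect product Z^2 ⋊_α Z embeds in SL(2,C): there exist x, μ in C with the matrices a = [[1,1],[0,1]], b = [[1,x],[0,1]], t = diag(μ, μ^{-1}) satisfying t a t^{-1} = a^i b^j and t b t^{-1} = a^k b^l (where α = [[i,j],[k,l]]), and the map sending the standard generators to a, b, t is injective. -/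
open Matrix Polynomial

noncomputable def Uel (u : ℂ) : Matrix.SpecialLinearGroup (Fin 2) ℂ :=
  ⟨!![1, u; 0, 1], by simp [Matrix.det_fin_two_of]⟩

lemma Uel_mul (u v : ℂ) : Uel u * Uel v = Uel (u + v) := by
  apply Subtype.ext
  show (!![1, u; 0,1] : Matrix (Fin 2) (Fin 2) ℂ) * !![1, v; 0,1] = !![1, u+v; 0,1]
  rw [Matrix.mul_fin_two]
  norm_num [add_comm]

noncomputable def Uhom : Multiplicative ℂ →* Matrix.SpecialLinearGroup (Fin 2) ℂ :=
  MonoidHom.mk' (fun u => Uel u.toAdd) (by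
    intro a b
    rw [toAdd_mul, ← Uel_mul])

noncomputable def Del (u : ℂˣ) : Matrix.SpecialLinearGroup (Fin 2) ℂ :=
  ⟨!![(u:ℂ), 0; 0, (u:ℂ)⁻¹], by
    simp [Matrix.det_fin_two_of, mul_inv_cancel₀ u.ne_zero]⟩

noncomputable def Dhom : ℂˣ →* Matrix.SpecialLinearGroup (Fin 2) ℂ :=
  MonoidHom.mk' Del (by
    intro a b
    apply Subtype.ext
    show (!![((a*b:ℂˣ):ℂ), 0; 0, ((a*b:ℂˣ):ℂ)⁻¹] : Matrix (Fin 2) (Fin 2) ℂ)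
       = !![(a:ℂ), 0; 0, (a:ℂ)⁻¹] * !![(b:ℂ), 0; 0, (b:ℂ)⁻¹]
    rw [Matrix.mul_fin_two]
    push_cast [mul_inv]
    norm_num)

lemma Uel_zpow (c : ℂ) (p : ℤ) : Uel c ^ p = Uel (p * c) := by
  have h1 : Uel c = Uhom (Multiplicative.ofAdd c) := rfl
  have h2 : Uel (p * c) = Uhom (Multiplicative.ofAdd (p * c)) := rfl
  rw [h1, h2, ← map_zpow]
  congr 1
  rw [← ofAdd_zsmul]
  simp [zsmul_eq_mul]

lemma Del_zpow (u : ℂˣ) (r : ℤ) : Del u ^ r = Del (u ^ r) := by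
  show Dhom u ^ r = Dhom (u ^ r)
  rw [← map_zpow]

lemma Del_conj (u : ℂˣ) (c : ℂ) : Del u * Uel c * (Del u)⁻¹ = Uel ((u:ℂ)^2 * c) := by
  rw [eq_comm, eq_mul_inv_iff_mul_eq]
  apply Subtype.ext
  show (!![1, (u:ℂ)^2*c; 0,1] : Matrix (Fin 2) (Fin 2) ℂ) * !![(u:ℂ), 0; 0, (u:ℂ)⁻¹]
     = !![(u:ℂ), 0; 0, (u:ℂ)⁻¹] * !![1, c; 0,1]
  rw [Matrix.mul_fin_two]
  rw [Matrix.mul_fin_two]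
  have h : (u:ℂ)^2*c*(u:ℂ)⁻¹ = (u:ℂ)*c := by
    field_simp [u.ne_zero]
  rw [h]
  norm_num

theorem torus_bundle_hyperbolic_embeds_SL2 (A : Matrix (Fin 2) (Fin 2) ℤ)
    (hdet : A.det = 1 ∨ A.det = -1)
    (hhyp : ∀ n : ℕ, 0 < n → ∀ v : Fin 2 → ℤ, (A ^ n).mulVec v = v → v = 0) :
    ∃ (x μ : ℂ), μ ≠ 0 ∧
      ∃ a b t : Matrix.SpecialLinearGroup (Fin 2) ℂ,
        (a : Matrix (Fin 2) (Fin 2) ℂ) = !![1, 1; 0, 1] ∧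
        (b : Matrix (Fin 2) (Fin 2) ℂ) = !![1, x; 0, 1] ∧
        (t : Matrix (Fin 2) (Fin 2) ℂ) = !![μ, 0; 0, μ⁻¹] ∧
        t * a * t⁻¹ = a ^ (A 0 0) * b ^ (A 0 1) ∧
        t * b * t⁻¹ = a ^ (A 1 0) * b ^ (A 1 1) ∧
        ∀ p q r : ℤ, a ^ p * b ^ q * t ^ r = 1 → p = 0 ∧ q = 0 ∧ r = 0 := by
  have hdet2 : A.det = A 0 0 * A 1 1 - A 0 1 * A 1 0 := Matrix.det_fin_two A
  -- step 0 : A 0 1 ≠ 0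
  have hA01 : A 0 1 ≠ 0 := by
    intro h0
    have hprod : A 0 0 * A 1 1 = A.det := by rw [hdet2, h0]; ring
    have h11 : A 1 1 * A 1 1 = 1 := by
      have hu : IsUnit (A 1 1) := by
        rcases hdet with h | h
        · exact IsUnit.of_mul_eq_one (A 0 0) (by rw [mul_comm, hprod, h])
        · exact IsUnit.of_mul_eq_one (-(A 0 0)) (by
            rw [h] at hprod; linear_combination -hprod)
      rcases Int.isUnit_iff.mp hu with h | h <;> rw [h] <;> ring
    have h2 := hhyp 2 two_pos ![0,1] (by
      funext i
      fin_cases i <;>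
        simp [pow_two, Matrix.mulVec, Matrix.mul_apply, dotProduct,
          Fin.sum_univ_two, h0, h11])
    have := congrFun h2 1
    simp at this
  have hβ : (A 0 1 : ℂ) ≠ 0 := Int.cast_ne_zero.mpr hA01
  set T : ℤ := A 0 0 + A 1 1 with hT
  have hTc : (T:ℂ) = (A 0 0 : ℂ) + (A 1 1 : ℂ) := by rw [hT]; push_cast; ring
  obtain ⟨s, hs⟩ := IsAlgClosed.exists_pow_nat_eq ((T:ℂ)^2 - 4 * A.det) two_pos
  set l : ℂ := ((T:ℂ) + s)/2 with hl
  have hchar : l^2 - T*l + A.det = 0 := by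
    rw [hl]; linear_combination hs/4
  have hDne : (A.det : ℂ) ≠ 0 := by
    rcases hdet with h | h <;> rw [h] <;> norm_num
  have hl0 : l ≠ 0 := by
    intro h
    apply hDne
    rw [h] at hchar
    simpa using hchar
  obtain ⟨μ, hμ⟩ := IsAlgClosed.exists_pow_nat_eq l two_pos
  have hμ0 : μ ≠ 0 := by
    intro h; apply hl0; rw [← hμ, h]; ring
  set x : ℂ := (l - A 0 0)/(A 0 1 : ℂ) with hx
  have hbx : (A 0 1 : ℂ) * x = l - A 0 0 := by
    rw [hx]; field_simp
  have E1 : (A 0 0 : ℂ) + A 0 1 * x = l := by linear_combination hbx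
  have hdc : (A.det : ℂ) = A 0 0 * A 1 1 - A 0 1 * A 1 0 := by
    rw [hdet2]; push_cast; ring
  have E2 : (A 1 0 : ℂ) + A 1 1 * x = l * x := by
    have h2 : (A 0 1:ℂ) * ((A 1 0:ℂ) + A 1 1 * x) = (A 0 1:ℂ) * (l * x) := by
      linear_combination ((A 1 1 : ℂ) - l) * hbx - hchar + hdc - l * hTc
    exact mul_left_cancel₀ hβ h2
  -- key lemma : no power of l is 1
  have hroot : ∀ n : ℕ, 0 < n → l ^ n ≠ 1 := by
    intro n hn heq
    set Ac : Matrix (Fin 2) (Fin 2) ℂ := (Int.castRingHom ℂ).mapMatrix A with hAc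
    have hAv : Ac.mulVec ![1, x] = l • ![1, x] := by
      funext i
      fin_cases i <;>
        simp [hAc, Matrix.mulVec, dotProduct, Fin.sum_univ_two,
          RingHom.mapMatrix_apply, Matrix.map_apply] <;>
      [exact (by linear_combination E1); exact (by linear_combination E2)]
    have hpow : ∀ m : ℕ, (Ac ^ m).mulVec ![1, x] = l ^ m • ![1, x] := by
      intro m
      induction m with
      | zero => simp
      | succ k ih =>
        rw [pow_succ', ← Matrix.mulVec_mulVec, ih, Matrix.mulVec_smul, hAv,
          smul_smul, ← pow_succ]
    set M : Matrix (Fin 2) (Fin 2) ℤ := A ^ n - 1 with hM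
    have hMc : ((Int.castRingHom ℂ).mapMatrix M) = Ac ^ n - 1 := by
      rw [hM, map_sub, map_pow, (Int.castRingHom ℂ).mapMatrix.map_one]
    have hMv : ((Int.castRingHom ℂ).mapMatrix M).mulVec ![1, x] = 0 := by
      rw [hMc, Matrix.sub_mulVec, hpow n, heq, one_smul, Matrix.one_mulVec, sub_self]
    have h0 : (M 0 0 : ℂ) + M 0 1 * x = 0 := by
      have := congrFun hMv 0
      simpa [Matrix.mulVec, dotProduct, Fin.sum_univ_two,
        RingHom.mapMatrix_apply, Matrix.map_apply] using this
    have h1 : (M 1 0 : ℂ) + M 1 1 * x = 0 := by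
      have := congrFun hMv 1
      simpa [Matrix.mulVec, dotProduct, Fin.sum_univ_two,
        RingHom.mapMatrix_apply, Matrix.map_apply] using this
    have hdM : M 0 0 * M 1 1 - M 0 1 * M 1 0 = 0 := by
      have hc : (M 0 0 : ℂ) * M 1 1 - M 0 1 * M 1 0 = 0 := by
        linear_combination (M 1 1 : ℂ) * h0 - (M 0 1 : ℂ) * h1
      exact_mod_cast hc
    have key : ∀ v : Fin 2 → ℤ, M.mulVec v = 0 → v = 0 := by
      intro v hv
      apply hhyp n hn
      have h3 : (A ^ n).mulVec v - v = 0 := by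
        rw [← hv, hM, Matrix.sub_mulVec, Matrix.one_mulVec]
      exact sub_eq_zero.mp h3
    have k1 := key ![M 1 1, -(M 1 0)] (by
      funext i
      fin_cases i <;>
        simp [Matrix.mulVec, dotProduct, Fin.sum_univ_two]
      · linear_combination hdM
      · ring)
    have k2 := key ![-(M 0 1), M 0 0] (by
      funext i
      fin_cases i <;>
        simp [Matrix.mulVec, dotProduct, Fin.sum_univ_two]
      · ring
      · linear_combination hdM)
    have e11 : M 1 1 = 0 := by simpa using congrFun k1 0
    have e10 : M 1 0 = 0 := by have := congrFun k1 1; simpa using this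
    have e01 : M 0 1 = 0 := by have := congrFun k2 0; simpa using this
    have e00 : M 0 0 = 0 := by simpa using congrFun k2 1
    have k3 := key ![1, 0] (by
      funext i
      fin_cases i <;>
        simp [Matrix.mulVec, dotProduct, Fin.sum_univ_two, e00, e01, e10, e11])
    simpa using congrFun k3 0
  -- construction
  set u : ℂˣ := Units.mk0 μ hμ0 with hu
  refine ⟨x, μ, hμ0, Uel 1, Uel x, Del u, rfl, rfl, rfl, ?_, ?_, ?_⟩
  · rw [Del_conj, Uel_zpow, Uel_zpow, Uel_mul]
    congr 1
    show μ^2 * 1 = _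
    rw [mul_one, hμ, ← E1]; ring
  · rw [Del_conj, Uel_zpow, Uel_zpow, Uel_mul]
    congr 1
    show μ^2 * x = _
    rw [hμ, ← E2]; ring
  · intro p q r h
    rw [Uel_zpow, Uel_zpow, Del_zpow, Uel_mul] at h
    have hval := congrArg Subtype.val h
    rw [Matrix.SpecialLinearGroup.coe_mul] at hval
    have hw : ((u^r : ℂˣ) : ℂ) = μ ^ r := by
      rw [hu]; exact Units.val_zpow_eq_zpow_val _ _
    have hmat : (!![1, (p:ℂ)*1+q*x; 0,1] : Matrix (Fin 2) (Fin 2) ℂ)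
        * !![μ^r, 0; 0, (μ^r)⁻¹] = 1 := by
      rw [← hw]
      exact hval
    rw [Matrix.mul_fin_two] at hmat
    have he00 : μ ^ r = 1 := by
      have := congrFun (congrFun hmat 0) 0
      simpa using this
    have hpq : (p:ℂ) + q * x = 0 := by
      have := congrFun (congrFun hmat 0) 1
      simp [he00] at this
      simpa using this
    have hr : r = 0 := by
      by_contra hr0
      have hlr : l ^ r = 1 := by
        have h2 : l ^ r = (μ ^ r) ^ 2 := by
          rw [← hμ, ← _root_.zpow_natCast μ 2, ← _root_.zpow_mul,
            ← _root_.zpow_natCast (μ ^ r) 2, ← _root_.zpow_mul, mul_comm]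
        rw [h2, he00, one_pow]
      rcases Int.natAbs_eq r with he | he
      · exact hroot r.natAbs (Int.natAbs_pos.mpr hr0) (by
          rw [← zpow_natCast, ← he, hlr])
      · have h3 : (l ^ r.natAbs)⁻¹ = 1 := by
          rw [← _root_.zpow_natCast, ← _root_.zpow_neg, ← he, hlr]
        exact hroot r.natAbs (Int.natAbs_pos.mpr hr0) (inv_eq_one.mp h3)
    have hq : q = 0 := by
      by_contra hq0
      have hqC : (q:ℂ) ≠ 0 := Int.cast_ne_zero.mpr hq0
      set sQ : ℚ := A 0 0 + A 0 1 * (-(p:ℚ)/q) with hsQ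
      have hxq : x = -(p:ℂ)/q := by
        rw [eq_div_iff hqC]; linear_combination hpq
      have hsl : (sQ:ℂ) = l := by
        rw [← E1, hsQ, hxq]; push_cast; ring
      have hQchar : sQ^2 - (T:ℚ)*sQ + (A.det:ℚ) = 0 := by
        have h4 : ((sQ^2 - T*sQ + A.det : ℚ) : ℂ) = 0 := by
          push_cast [hsl, -Int.cast_det, -Rat.cast_det]; linear_combination hchar
        exact_mod_cast h4
      have hint : IsIntegral ℤ sQ := by
        refine ⟨X^2 - C T * X + C A.det, ?_, ?_⟩
        · monicity!
        · simp only [eval₂_add, eval₂_sub, eval₂_mul, eval₂_pow, eval₂_X, eval₂_C]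
          simp only [algebraMap_int_eq, eq_intCast]
          exact_mod_cast hQchar
      obtain ⟨m, hm⟩ := IsIntegrallyClosed.isIntegral_iff.mp hint
      have hmQ : (m:ℚ) = sQ := by rw [← hm]; simp
      have hZ : m*m - T*m + A.det = 0 := by
        have h5 : ((m*m - T*m + A.det : ℤ):ℚ) = 0 := by
          push_cast [hmQ, -Int.cast_det]; linear_combination hQchar
        exact_mod_cast h5
      have hm1 : m = 1 ∨ m = -1 := by
        rcases hdet with h6 | h6
        · exact Int.isUnit_iff.mp (IsUnit.of_mul_eq_one (T - m) (by
            rw [h6] at hZ; linear_combination -hZ))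
        · exact Int.isUnit_iff.mp (IsUnit.of_mul_eq_one (m - T) (by
            rw [h6] at hZ; linear_combination hZ))
      have hl2 : l ^ 2 = 1 := by
        rw [← hsl, ← hmQ]
        rcases hm1 with h7 | h7 <;> rw [h7] <;> norm_num
      exact hroot 2 two_pos hl2
    have hp : p = 0 := by
      have h8 : (p:ℂ) = 0 := by
        rw [hq] at hpq; push_cast at hpq; simpa using hpq
      exact_mod_cast h8
    exact ⟨hp, hq, hr⟩
end

section
/- Let G embed in SL(2,C) and let Γ be an HNN extension of G with stable letter t identifying subgroups A and B of G via an isomorphism θ. If there exist a in A with a ≠ ±I and g in G with θ(a) = g a^{-1} g^{-1}, then Γ does not embed in SL(2,C). -/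
open Matrix

-- Cayley–Hamilton for 2x2
lemma CH2 (m : Matrix (Fin 2) (Fin 2) ℂ) :
    m * m = m.trace • m - m.det • 1 := by
  ext i j
  fin_cases i <;> fin_cases j <;>
    simp [Matrix.mul_apply, Fin.sum_univ_two, Matrix.trace_fin_two, Matrix.det_fin_two,
      Matrix.one_apply] <;> ring

lemma sq_eq_one_cases (x : Matrix (Fin 2) (Fin 2) ℂ) (hdet : x.det = 1)
    (h : x * x = 1) : x = 1 ∨ x = -1 := by
  have hch := CH2 x
  rw [h, hdet, one_smul] at hch
  -- 1 = trace x • x - 1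
  have htx : x.trace • x = (2 : ℂ) • (1 : Matrix (Fin 2) (Fin 2) ℂ) := by
    have : x.trace • x - 1 = 1 := hch.symm
    have h2 := sub_eq_iff_eq_add.mp this
    rw [h2]; ext i j; fin_cases i <;> fin_cases j <;> simp [Matrix.one_apply] <;> ring
  by_cases ht : x.trace = 0
  · exfalso
    rw [ht, zero_smul] at htx
    have := congrFun (congrFun htx.symm 0) 0
    simp [Matrix.one_apply] at this
  · have hx : x = (2 / x.trace) • (1 : Matrix (Fin 2) (Fin 2) ℂ) := by
      have := congrArg (fun y => (x.trace)⁻¹ • y) htx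
      simpa [smul_smul, inv_mul_cancel₀ ht, div_eq_mul_inv, mul_comm] using this
    have hdet2 : (2 / x.trace) ^ 2 = 1 := by
      have := hdet
      rw [hx] at this
      simpa [Matrix.det_smul, Fin.prod_univ_two, pow_two] using this
    have : 2 / x.trace = 1 ∨ 2 / x.trace = -1 := by
      exact sq_eq_one_iff.mp hdet2
    rcases this with h1 | h1
    · left; rw [hx, h1, one_smul]
    · right; rw [hx, h1]; ext i j; simp

open scoped MatrixGroups

lemma order_four (M X : SL(2, ℂ)) (hrel : M * X * M⁻¹ = X⁻¹)
    (hX2 : X * X ≠ 1) : M ^ 4 = 1 := by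
  have h2 : M * X = X⁻¹ * M := mul_inv_eq_iff_eq_mul.mp hrel
  have h2' : M * X⁻¹ = X * M := by
    calc M * X⁻¹ = X * (X⁻¹ * M) * X⁻¹ * X * X⁻¹ := by group
    _ = X * (M * X) * X⁻¹ * X * X⁻¹ := by rw [h2]
    _ = X * M := by group
  have hMM : M * M * X = X * (M * M) := by
    calc M * M * X = M * (M * X) := by group
    _ = M * (X⁻¹ * M) := by rw [h2]
    _ = (M * X⁻¹) * M := by group
    _ = (X * M) * M := by rw [h2']
    _ = X * (M * M) := by group
  -- pass to matrices
  set m : Matrix (Fin 2) (Fin 2) ℂ := (M : Matrix (Fin 2) (Fin 2) ℂ) with hm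
  set x : Matrix (Fin 2) (Fin 2) ℂ := (X : Matrix (Fin 2) (Fin 2) ℂ) with hx
  have hmm : m * m * x = x * (m * m) := by
    have := congrArg (fun y : SL(2,ℂ) => (y : Matrix (Fin 2) (Fin 2) ℂ)) hMM
    simpa using this
  have hch := CH2 m
  rw [M.det_coe, one_smul] at hch
  rw [hch] at hmm
  have hcomm : m.trace • (m * x) = m.trace • (x * m) := by
    have h : (m.trace • m - 1) * x = x * (m.trace • m - 1) := hmm
    rw [sub_mul, mul_sub, smul_mul_assoc, mul_smul_comm, one_mul, mul_one] at h
    have h' := congrArg (· + x) h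
    simpa using h'
  by_cases ht : m.trace = 0
  · -- trace 0 : m * m = -1, so M^4 = 1
    have hmsq : m * m = -1 := by rw [hch, ht, zero_smul, zero_sub]
    apply Subtype.ext
    show ((M ^ 4 : SL(2,ℂ)) : Matrix (Fin 2) (Fin 2) ℂ) = _
    have h4 : ((M ^ 4 : SL(2,ℂ)) : Matrix (Fin 2) (Fin 2) ℂ) = m * m * (m * m) := by
      simp [pow_succ, hm, mul_assoc]
    rw [h4, hmsq]
    simp
  · exfalso
    have hmx : m * x = x * m := smul_right_injective _ ht hcomm
    have hMX : M * X = X * M := by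
      apply Subtype.ext
      show ((M * X : SL(2,ℂ)) : Matrix (Fin 2) (Fin 2) ℂ) = ((X * M : SL(2,ℂ)) : Matrix (Fin 2) (Fin 2) ℂ)
      simp only [Matrix.SpecialLinearGroup.coe_mul, ← hm, ← hx, hmx]
    have hXinv : X⁻¹ = X := mul_right_cancel (h2.symm.trans hMX)
    apply hX2
    calc X * X = X * X⁻¹ := by rw [hXinv]
    _ = 1 := by simp

theorem hnn_inverting_conjugation_does_not_embed
    (G : Subgroup (Matrix.SpecialLinearGroup (Fin 2) ℂ))
    (A B : Subgroup G) (θ : A ≃* B)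
    (a : G) (ha : a ∈ A)
    (ha1 : (a : Matrix.SpecialLinearGroup (Fin 2) ℂ) ≠ 1)
    (haneg : ((a : Matrix.SpecialLinearGroup (Fin 2) ℂ) : Matrix (Fin 2) (Fin 2) ℂ) ≠ -1)
    (g : G) (hθ : (θ ⟨a, ha⟩ : G) = g * a⁻¹ * g⁻¹) :
    ¬ ∃ ψ : HNNExtension G A B θ →* Matrix.SpecialLinearGroup (Fin 2) ℂ,
        Function.Injective ψ := by
  rintro ⟨ψ, hψ⟩
  classical
  set Γ := HNNExtension G A B θ
  set w : Γ := HNNExtension.of (g⁻¹ : G) * HNNExtension.t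
  -- the key relation in Γ
  have hrelΓ : w * HNNExtension.of a * w⁻¹ = HNNExtension.of a⁻¹ := by
    have hconj : HNNExtension.t * HNNExtension.of (a : G) * HNNExtension.t⁻¹
        = (HNNExtension.of (θ ⟨a, ha⟩ : G) : Γ) := by
      rw [HNNExtension.equiv_eq_conj]
    have hwinv : w⁻¹ = HNNExtension.t⁻¹ * HNNExtension.of (g : G) := by
      show (HNNExtension.of (g⁻¹ : G) * HNNExtension.t)⁻¹ = _
      rw [_root_.mul_inv_rev, ← _root_.map_inv, inv_inv]
    calc w * HNNExtension.of a * w⁻¹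
        = HNNExtension.of (g⁻¹ : G) *
          (HNNExtension.t * HNNExtension.of (a : G) * HNNExtension.t⁻¹) *
          HNNExtension.of (g : G) := by
          rw [hwinv]; simp [w, mul_assoc]
    _ = HNNExtension.of (g⁻¹ : G) * HNNExtension.of (θ ⟨a, ha⟩ : G) *
          HNNExtension.of (g : G) := by rw [hconj]
    _ = HNNExtension.of (g⁻¹ * (g * a⁻¹ * g⁻¹) * g) := by
          rw [hθ]; simp [_root_.map_mul]
    _ = HNNExtension.of a⁻¹ := by group
  set M := ψ w
  set X := ψ (HNNExtension.of a)
  have hrelSL : M * X * M⁻¹ = X⁻¹ := by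
    have := congrArg ψ hrelΓ
    simpa [M, X, _root_.map_mul, _root_.map_inv] using this
  have hX2 : X * X ≠ 1 := by
    intro hXX
    have : ψ (HNNExtension.of a * HNNExtension.of a) = ψ 1 := by
      simpa [_root_.map_mul, _root_.map_one] using hXX
    have haa : HNNExtension.of (a : G) * HNNExtension.of (a : G) = (1 : Γ) := hψ this
    have haa2 : (HNNExtension.of ((a * a : G)) : Γ) = HNNExtension.of (1 : G) := by
      simpa [_root_.map_mul, _root_.map_one] using haa
    have ha2 : (a : G) * a = 1 := HNNExtension.of_injective (G := G) (A := A) (B := B) (φ := θ) haa2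
    -- now a*a = 1 in G, hence in SL(2,ℂ), hence a = ±1
    have hsl : ((a : Matrix.SpecialLinearGroup (Fin 2) ℂ) : Matrix (Fin 2) (Fin 2) ℂ) *
        ((a : Matrix.SpecialLinearGroup (Fin 2) ℂ) : Matrix (Fin 2) (Fin 2) ℂ) = 1 := by
      have := congrArg (fun y : G => ((y : Matrix.SpecialLinearGroup (Fin 2) ℂ) :
        Matrix (Fin 2) (Fin 2) ℂ)) ha2
      simpa using this
    rcases sq_eq_one_cases _ ((a : Matrix.SpecialLinearGroup (Fin 2) ℂ)).det_coe hsl with h | h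
    · exact ha1 (Subtype.ext h)
    · exact haneg h
  have hM4 : M ^ 4 = 1 := order_four M X hrelSL hX2
  have hw4 : w ^ 4 = (1 : Γ) := by
    apply hψ
    simpa [map_pow, _root_.map_one] using hM4
  -- exponent sum homomorphism
  have hx : ∀ c : A, (Multiplicative.ofAdd (1 : ℤ)) * (1 : G →* Multiplicative ℤ) (c : G)
      = (1 : G →* Multiplicative ℤ) ((θ c : G)) * Multiplicative.ofAdd (1 : ℤ) := by
    intro c; simp
  set φ : Γ →* Multiplicative ℤ :=
    HNNExtension.lift (1 : G →* Multiplicative ℤ) (Multiplicative.ofAdd (1 : ℤ)) hx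
  have hφw : φ w = Multiplicative.ofAdd (1 : ℤ) := by
    show φ (HNNExtension.of (g⁻¹ : G) * HNNExtension.t) = _
    rw [_root_.map_mul, HNNExtension.lift_of, HNNExtension.lift_t]
    simp
  have : φ (w ^ 4) = Multiplicative.ofAdd (4 : ℤ) := by
    rw [map_pow, hφw]
    rfl
  rw [hw4, _root_.map_one] at this
  exact absurd this.symm (by decide)
end

section
/- There is no pair of elements A, B generating a non-abelian free subgroup of SL(2,C) such that A, B, AB and the commutator ABA^{-1}B^{-1} all have the same trace z. In fact, the Fricke trace identity tr(A)^2 + tr(B)^2 + tr(AB)^2 − 2 = tr(A)·tr(B)·tr(AB) + tr(ABA^{-1}B^{-1}) forces (z−2)(z^2−z−1) = 0; z = 2 makes ⟨A,B⟩ metabelian, and the other roots force an element of order 5. -/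
/-- Cayley–Hamilton for 2×2 complex matrices. -/
lemma CH2_aux (P : Matrix (Fin 2) (Fin 2) ℂ) : P * P = P.trace • P - P.det • 1 := by
  ext i j
  fin_cases i <;> fin_cases j <;>
    simp [Matrix.mul_apply, Fin.sum_univ_two, Matrix.trace_fin_two, Matrix.det_fin_two,
      Matrix.one_apply] <;> ring



theorem no_free_pair_with_equal_traces
    (A B : Matrix.SpecialLinearGroup (Fin 2) ℂ) (z : ℂ)
    (hA : Matrix.trace (A : Matrix (Fin 2) (Fin 2) ℂ) = z)
    (hB : Matrix.trace (B : Matrix (Fin 2) (Fin 2) ℂ) = z)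
    (hAB : Matrix.trace ((A * B : Matrix.SpecialLinearGroup (Fin 2) ℂ) :
        Matrix (Fin 2) (Fin 2) ℂ) = z)
    (hComm : Matrix.trace ((A * B * A⁻¹ * B⁻¹ : Matrix.SpecialLinearGroup (Fin 2) ℂ) :
        Matrix (Fin 2) (Fin 2) ℂ) = z) :
    ¬ ∃ φ : FreeGroup (Fin 2) →* Matrix.SpecialLinearGroup (Fin 2) ℂ,
        Function.Injective φ ∧ φ (FreeGroup.of 0) = A ∧ φ (FreeGroup.of 1) = B := by
  rintro ⟨φ, hinj, h0, h1⟩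
  set M : Matrix (Fin 2) (Fin 2) ℂ := ↑A with hM
  set N : Matrix (Fin 2) (Fin 2) ℂ := ↑B with hN
  have hdetM : M.det = 1 := A.2
  have hdetN : N.det = 1 := B.2
  have hAinv : ((A⁻¹ : Matrix.SpecialLinearGroup (Fin 2) ℂ) : Matrix (Fin 2) (Fin 2) ℂ)
      = z • 1 - M := by
    rw [Matrix.SpecialLinearGroup.coe_inv, Matrix.adjugate_fin_two]
    have := hA
    rw [Matrix.trace_fin_two] at this
    ext i j
    fin_cases i <;> fin_cases j <;>
      simp [Matrix.one_apply, ← hM] <;> linear_combination this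
  have hBinv : ((B⁻¹ : Matrix.SpecialLinearGroup (Fin 2) ℂ) : Matrix (Fin 2) (Fin 2) ℂ)
      = z • 1 - N := by
    rw [Matrix.SpecialLinearGroup.coe_inv, Matrix.adjugate_fin_two]
    have := hB
    rw [Matrix.trace_fin_two] at this
    ext i j
    fin_cases i <;> fin_cases j <;>
      simp [Matrix.one_apply, ← hN] <;> linear_combination this
  have hMN : Matrix.trace (M * N) = z := by simpa using hAB
  have hM2 : M * M = z • M - (1 : Matrix (Fin 2) (Fin 2) ℂ) := by
    rw [CH2_aux, hA, hdetM, one_smul]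
  have hN2 : N * N = z • N - (1 : Matrix (Fin 2) (Fin 2) ℂ) := by
    rw [CH2_aux, hB, hdetN, one_smul]
  have hP2 : (M * N) * (M * N) = z • (M * N) - (1 : Matrix (Fin 2) (Fin 2) ℂ) := by
    rw [CH2_aux, hMN, Matrix.det_mul, hdetM, hdetN, one_mul, one_smul]
  have t1 : Matrix.trace (M * (N * N)) = z^2 - z := by
    rw [hN2, Matrix.mul_sub, mul_smul_comm, Matrix.trace_sub, Matrix.trace_smul, hMN,
      Matrix.mul_one, hA, smul_eq_mul]
    ring
  have t2 : Matrix.trace (M * N * M) = z^2 - z := by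
    rw [Matrix.trace_mul_comm, ← Matrix.mul_assoc, hM2, Matrix.sub_mul, smul_mul_assoc,
      Matrix.trace_sub, Matrix.trace_smul, hMN, Matrix.one_mul, hB, smul_eq_mul]
    ring
  have t3 : Matrix.trace ((M * N) * (M * N)) = z^2 - 2 := by
    rw [hP2, Matrix.trace_sub, Matrix.trace_smul, hMN, Matrix.trace_one, smul_eq_mul]
    ring_nf
    simp [Fintype.card_fin]
    ring
  have expand : M * N * (z • 1 - M) * (z • 1 - N)
      = (z*z) • (M*N) - z • (M*(N*N)) - z • (M*N*M) + (M*N)*(M*N) := by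
    simp only [Matrix.mul_sub, Matrix.sub_mul, mul_smul_comm, smul_mul_assoc,
      Matrix.mul_one, Matrix.one_mul, smul_smul, smul_sub, Matrix.mul_assoc]
    abel
  have hC : Matrix.trace (M * N * (z • 1 - M) * (z • 1 - N)) = z := by
    rw [← hAinv, ← hBinv]
    simpa using hComm
  rw [expand] at hC
  rw [Matrix.trace_add, Matrix.trace_sub, Matrix.trace_sub, Matrix.trace_smul,
    Matrix.trace_smul, Matrix.trace_smul, hMN, t1, t2, t3] at hC
  simp only [smul_eq_mul] at hC
  have hfac : (z - 2) * (z^2 - z - 1) = 0 := by linear_combination -hC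
  rcases mul_eq_zero.mp hfac with h2 | h5
  · -- z = 2 : A and B commute
    have hz2 : z = 2 := by linear_combination h2
    rw [hz2] at hA hB hMN
    rw [Matrix.trace_fin_two] at hA hB
    rw [Matrix.trace_fin_two] at hMN
    simp only [Matrix.mul_apply, Fin.sum_univ_two] at hMN
    set a := M 0 0; set b := M 0 1; set c := M 1 0; set d := M 1 1
    set e := N 0 0; set f := N 0 1; set g := N 1 0; set h := N 1 1
    have hdetA : a * d - b * c = 1 := by
      have := hdetM; rw [Matrix.det_fin_two] at this; exact this
    have hdetB : e * h - f * g = 1 := by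
      have := hdetN; rw [Matrix.det_fin_two] at this; exact this
    have hd : d = 2 - a := by linear_combination hA
    have hh : h = 2 - e := by linear_combination hB
    have hbc : b * c = -(a-1)^2 := by linear_combination a*hA - hdetA
    have hfg : f * g = -(e-1)^2 := by linear_combination e*hB - hdetB
    have hs : b*g + c*f = -2*(a-1)*(e-1) := by
      linear_combination hMN - h*hd + (a-2)*hh
    have hu : b*g - c*f = 0 := by
      have : (b*g - c*f)^2 = 0 := by
        linear_combination (b*g + c*f - 2*(a-1)*(e-1))*hs - 4*f*g*hbc + 4*(a-1)^2*hfg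
      exact pow_eq_zero_iff (two_ne_zero) |>.mp this
    have hv : f*(a-1) - b*(e-1) = 0 := by
      have : (f*(a-1) - b*(e-1))^2 = 0 := by
        linear_combination f^2*hbc + b^2*hfg - b*f*hs
      exact pow_eq_zero_iff (two_ne_zero) |>.mp this
    have hw : c*(e-1) - g*(a-1) = 0 := by
      have : (c*(e-1) - g*(a-1))^2 = 0 := by
        linear_combination c^2*hfg + g^2*hbc - c*g*hs
      exact pow_eq_zero_iff (two_ne_zero) |>.mp this
    have key : M * N = N * M := by
      rw [Matrix.eta_fin_two M, Matrix.eta_fin_two N]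
      ext i j
      fin_cases i <;> fin_cases j <;> simp [Matrix.mul_apply, Fin.sum_univ_two]
      · linear_combination hu
      · linear_combination 2*hv - f*hd + b*hh
      · linear_combination 2*hw + g*hd - c*hh
      · linear_combination -hu
    have hABBA : A * B = B * A := Subtype.ext (by
      rw [Matrix.SpecialLinearGroup.coe_mul, Matrix.SpecialLinearGroup.coe_mul]; exact key)
    have hcon : FreeGroup.of (0 : Fin 2) * FreeGroup.of 1 = FreeGroup.of 1 * FreeGroup.of 0 :=
      hinj (by rw [_root_.map_mul, _root_.map_mul, h0, h1, hABBA])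
    have hperm := congrArg (FreeGroup.lift ![Equiv.swap (0:Fin 3) 1, Equiv.swap 1 2]) hcon
    simp only [_root_.map_mul, FreeGroup.lift_apply_of, Matrix.cons_val_zero, Matrix.cons_val_one,
      Matrix.head_cons] at hperm
    exact absurd hperm (by decide)
  · -- z² = z + 1 : A has order dividing 10
    have hzz : z * z = z + 1 := by linear_combination h5
    have hM3 : M * M * M = z • M - z • (1 : Matrix (Fin 2) (Fin 2) ℂ) := by
      rw [hM2, sub_mul, smul_mul_assoc, hM2, one_mul, smul_sub]
      rw [smul_smul, hzz, add_smul, one_smul]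
      abel
    have e : (z • M - z • (1:Matrix (Fin 2) (Fin 2) ℂ)) * (z • M - 1)
        = (z*z) • (M*M) - z • M - (z*z) • M + z • (1:Matrix (Fin 2) (Fin 2) ℂ) := by
      simp only [sub_mul, mul_sub, smul_mul_assoc, mul_smul_comm, mul_one, one_mul,
        smul_sub, smul_add, smul_smul]
      abel
    have hM5 : M ^ 5 = -1 := by
      have h5' : M ^ 5 = (M * M * M) * (M * M) := by
        rw [pow_succ, pow_succ, pow_succ, pow_succ, pow_one, mul_assoc]
      rw [h5', hM3, hM2, e, hM2]
      match_scalars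
      · linear_combination z*h5
      · linear_combination -h5
    have h10 : M ^ 10 = 1 := by
      rw [show (10:ℕ) = 5*2 from rfl, pow_mul, hM5]
      simp
    have hApow : A ^ 10 = 1 :=
      Subtype.ext (by rw [Matrix.SpecialLinearGroup.coe_pow]; simpa using h10)
    have hcon : (FreeGroup.of (0 : Fin 2)) ^ 10 = 1 :=
      hinj (by rw [map_pow, h0, _root_.map_one, hApow])
    have h2 := congrArg (FreeGroup.lift (fun _ : Fin 2 => Multiplicative.ofAdd (1:ℤ))) hcon
    simp only [map_pow, FreeGroup.lift_apply_of] at h2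
    have h10' : (10:ℕ) • (1:ℤ) = 0 := by simpa using congrArg Multiplicative.toAdd h2
    norm_num at h10'
end
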